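/- arXiv:2303.06218 — 5 statements merged into one kernel-verified Lean document; each statement's English description precedes it below -/
import Mathlib

section
/- The quotient of the torus S¹ × S¹ by the ℤ/2-action (λ, μ) ↦ (λ⁻¹, μ⁻¹) is homeomorphic to the 2-sphere S². -/
open Real

/-! Auxiliary real-valued functions defining the explicit map from the torus to the sphere. -/

noncomputable def XX (u v : ℝ) : ℝ := u * max |u| |v| / Real.sqrt (u^2+v^2)
noncomputable def ZZ (u v s1 s2 : ℝ) : ℝ := s1 * s2 / Real.sqrt (max (1-u^2) (1-v^2))

lemma max_abs_le_sqrt (u v : ℝ) : max |u| |v| ≤ Real.sqrt (u^2+v^2) := by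
  apply max_le
  · rw [← Real.sqrt_sq_eq_abs]; exact Real.sqrt_le_sqrt (by nlinarith)
  · rw [← Real.sqrt_sq_eq_abs]; exact Real.sqrt_le_sqrt (by nlinarith)

lemma abs_XX_le (u v : ℝ) : |XX u v| ≤ |u| := by
  unfold XX
  rcases eq_or_lt_of_le (Real.sqrt_nonneg (u^2+v^2)) with h | h
  · rw [← h, div_zero, abs_zero]; exact abs_nonneg u
  · rw [abs_div, abs_mul, abs_of_nonneg (le_trans (abs_nonneg u) (le_max_left _ _)),
      abs_of_pos h, div_le_iff₀ h]
    have := max_abs_le_sqrt u v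
    nlinarith [abs_nonneg u]

lemma continuous_XX : Continuous (fun p : ℝ × ℝ => XX p.1 p.2) := by
  rw [continuous_iff_continuousAt]
  intro ⟨u, v⟩
  rcases eq_or_ne (u, v) (0, 0) with h | h
  · rw [h]
    have h0 : XX 0 0 = 0 := by simp [XX]
    show Filter.Tendsto _ _ _
    simp only [h0]
    apply squeeze_zero_norm (fun p : ℝ × ℝ => abs_XX_le p.1 p.2)
    have : Filter.Tendsto (fun p : ℝ × ℝ => |p.1|) (nhds (0,0)) (nhds |(0:ℝ)|) :=
      (continuous_abs.comp continuous_fst).tendsto (0,0)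
    simpa using this
  · have hR : u^2 + v^2 ≠ 0 := by
      intro hc
      apply h
      have hu : u = 0 := by nlinarith [sq_nonneg u, sq_nonneg v]
      have hv : v = 0 := by nlinarith [sq_nonneg u, sq_nonneg v]
      simp [hu, hv]
    have hRpos : 0 < u^2+v^2 := lt_of_le_of_ne (by positivity) (Ne.symm hR)
    apply ContinuousAt.div
    · fun_prop
    · fun_prop
    · exact ne_of_gt (Real.sqrt_pos.mpr hRpos)

lemma sq_max_abs (u v : ℝ) : (max |u| |v|)^2 = max (u^2) (v^2) := by
  rcases le_total |u| |v| with h | h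
  · rw [max_eq_right h,
      max_eq_right (by nlinarith [abs_nonneg u, abs_nonneg v, sq_abs u, sq_abs v]), sq_abs]
  · rw [max_eq_left h,
      max_eq_left (by nlinarith [abs_nonneg u, abs_nonneg v, sq_abs u, sq_abs v]), sq_abs]

lemma normXX (u v : ℝ) : (XX u v)^2 + (XX v u)^2 = max (u^2) (v^2) := by
  rcases eq_or_ne (u^2+v^2) 0 with h | h
  · have hu : u = 0 := by nlinarith [sq_nonneg u, sq_nonneg v]
    have hv : v = 0 := by nlinarith [sq_nonneg u, sq_nonneg v]
    simp [XX, hu, hv]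
  · have hRpos : 0 < u^2+v^2 := lt_of_le_of_ne (by positivity) (Ne.symm h)
    have hs : Real.sqrt (u^2+v^2) ^ 2 = u^2+v^2 := Real.sq_sqrt (le_of_lt hRpos)
    have hspos : 0 < Real.sqrt (u^2+v^2) := Real.sqrt_pos.mpr hRpos
    unfold XX
    rw [← sq_max_abs u v]
    have hcomm : v^2 + u^2 = u^2+v^2 := by ring
    rw [hcomm, max_comm |v| |u|]
    field_simp
    rw [hs]

lemma sq_ZZ (u v s1 s2 : ℝ) (hu : u^2+s1^2 = 1) (hv : v^2+s2^2 = 1) :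
    (ZZ u v s1 s2)^2 = 1 - max (u^2) (v^2) := by
  unfold ZZ
  have hA : 1 - u^2 = s1^2 := by linarith
  have hB : 1 - v^2 = s2^2 := by linarith
  rcases eq_or_ne (max (1-u^2) (1-v^2)) 0 with h | h
  · have hA0 : 1 - u^2 = 0 := le_antisymm (h ▸ le_max_left _ _) (by nlinarith [sq_nonneg s1])
    have hB0 : 1 - v^2 = 0 := le_antisymm (h ▸ le_max_right _ _) (by nlinarith [sq_nonneg s2])
    rw [h, Real.sqrt_zero, div_zero, max_eq_left (by linarith : (v:ℝ)^2 ≤ u^2)]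
    nlinarith
  · have hpos : 0 < max (1-u^2) (1-v^2) :=
      lt_of_le_of_ne (le_max_iff.mpr (Or.inl (by nlinarith [sq_nonneg s1]))) (Ne.symm h)
    rw [div_pow, Real.sq_sqrt (le_of_lt hpos), mul_pow]
    rw [← hA, ← hB]
    have hmm : max (u^2) (v^2) = 1 - min (1-u^2) (1-v^2) := by
      rcases le_total (u^2) (v^2) with hc | hc
      · rw [max_eq_right hc, min_eq_right (by linarith)]; ring
      · rw [max_eq_left hc, min_eq_left (by linarith)]; ring
    rw [hmm]
    rcases le_total (1-u^2) (1-v^2) with hc | hc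
    · rw [max_eq_right hc, min_eq_left hc] at *
      field_simp
      ring
    · rw [max_eq_left hc, min_eq_right hc] at *
      field_simp
      ring

lemma norm_id (u v s1 s2 : ℝ) (hu : u^2+s1^2 = 1) (hv : v^2+s2^2 = 1) :
    (XX u v)^2 + (XX v u)^2 + (ZZ u v s1 s2)^2 = 1 := by
  rw [normXX, sq_ZZ u v s1 s2 hu hv]; ring

lemma abs_ZZ_le (u v s1 s2 : ℝ) (hu : u^2+s1^2 = 1) (hv : v^2+s2^2 = 1) :
    |ZZ u v s1 s2| ≤ |s1| := by
  unfold ZZ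
  rcases eq_or_ne (Real.sqrt (max (1-u^2) (1-v^2))) 0 with h | h
  · rw [h, div_zero, abs_zero]; exact abs_nonneg s1
  · have hnn : 0 ≤ max (1-u^2) (1-v^2) := le_max_of_le_left (by nlinarith [sq_nonneg s1])
    have hpos : 0 < Real.sqrt (max (1-u^2) (1-v^2)) :=
      lt_of_le_of_ne (Real.sqrt_nonneg _) (Ne.symm h)
    have hge : |s2| ≤ Real.sqrt (max (1-u^2) (1-v^2)) := by
      rw [← Real.sqrt_sq_eq_abs]
      exact Real.sqrt_le_sqrt (le_max_of_le_right (by linarith))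
    rw [abs_div, abs_mul, abs_of_pos hpos, div_le_iff₀ hpos]
    nlinarith [abs_nonneg s1, abs_nonneg s2]

lemma XX_inj (u v u' v' : ℝ) (hx : XX u v = XX u' v') (hy : XX v u = XX v' u') :
    u = u' ∧ v = v' := by
  have hMnn : 0 ≤ max |u| |v| := le_trans (abs_nonneg u) (le_max_left _ _)
  have hMM : max |u| |v| = max |u'| |v'| := by
    have h1 : (max |u| |v|)^2 = (max |u'| |v'|)^2 := by
      rw [sq_max_abs, sq_max_abs, ← normXX, ← normXX, hx, hy]
    have hM'nn : 0 ≤ max |u'| |v'| := le_trans (abs_nonneg u') (le_max_left _ _)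
    nlinarith
  rcases eq_or_lt_of_le hMnn with hM0 | hMpos
  · have hM0 : max |u| |v| = 0 := hM0.symm
    have hu : u = 0 := abs_nonpos_iff.mp (hM0 ▸ le_max_left |u| |v|)
    have hv : v = 0 := abs_nonpos_iff.mp (hM0 ▸ le_max_right |u| |v|)
    have hM0' : max |u'| |v'| = 0 := hMM ▸ hM0
    have hu' : u' = 0 := abs_nonpos_iff.mp (hM0' ▸ le_max_left |u'| |v'|)
    have hv' : v' = 0 := abs_nonpos_iff.mp (hM0' ▸ le_max_right |u'| |v'|)
    exact ⟨hu.trans hu'.symm, hv.trans hv'.symm⟩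
  · have hM'pos : 0 < max |u'| |v'| := hMM ▸ hMpos
    have hRpos : 0 < u^2 + v^2 := by
      rcases max_cases |u| |v| with ⟨he, _⟩ | ⟨he, _⟩ <;>
        nlinarith [sq_nonneg u, sq_nonneg v, abs_nonneg u, abs_nonneg v, sq_abs u, sq_abs v]
    have hR'pos : 0 < u'^2 + v'^2 := by
      rcases max_cases |u'| |v'| with ⟨he, _⟩ | ⟨he, _⟩ <;>
        nlinarith [sq_nonneg u', sq_nonneg v', abs_nonneg u', abs_nonneg v', sq_abs u', sq_abs v']
    have hRp : 0 < Real.sqrt (u^2+v^2) := Real.sqrt_pos.mpr hRpos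
    have hR'p : 0 < Real.sqrt (u'^2+v'^2) := Real.sqrt_pos.mpr hR'pos
    have key : ∀ a b : ℝ, 0 < Real.sqrt (a^2+b^2) →
        max |XX a b| |XX b a| = (max |a| |b|)^2 / Real.sqrt (a^2+b^2) := by
      intro a b hp
      have hmnn : (0:ℝ) ≤ max |a| |b| := le_trans (abs_nonneg a) (le_max_left _ _)
      have h1 : |XX a b| = |a| * max |a| |b| / Real.sqrt (a^2+b^2) := by
        unfold XX
        rw [abs_div, abs_mul, abs_of_nonneg hmnn, abs_of_pos hp]
      have h2 : |XX b a| = |b| * max |a| |b| / Real.sqrt (a^2+b^2) := by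
        unfold XX
        rw [show b^2+a^2 = a^2+b^2 by ring, max_comm |b| |a|]
        rw [abs_div, abs_mul, abs_of_nonneg hmnn, abs_of_pos hp]
      rw [h1, h2]
      rcases le_total |a| |b| with hc | hc
      · rw [max_eq_right ((div_le_div_iff_of_pos_right hp).mpr (mul_le_mul_of_nonneg_right hc hmnn)),
          max_eq_right hc]
        ring_nf
      · rw [max_eq_left ((div_le_div_iff_of_pos_right hp).mpr (mul_le_mul_of_nonneg_right hc hmnn)),
          max_eq_left hc]
        ring_nf
    have hkey1 := key u v hRp
    have hkey2 := key u' v' hR'p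
    have hRR : Real.sqrt (u^2+v^2) = Real.sqrt (u'^2+v'^2) := by
      have heq : (max |u| |v|)^2 / Real.sqrt (u^2+v^2)
          = (max |u| |v|)^2 / Real.sqrt (u'^2+v'^2) := by
        rw [← hkey1, hMM, ← hkey2, hx, hy]
      have hM2 : (0:ℝ) < (max |u| |v|)^2 := by positivity
      field_simp at heq
      rw [heq]
    have hu : u = u' := by
      have hx' : u * max |u| |v| / Real.sqrt (u^2+v^2)
          = u' * max |u'| |v'| / Real.sqrt (u'^2+v'^2) := hx
      rw [← hMM, ← hRR] at hx'
      rw [mul_div_assoc, mul_div_assoc] at hx'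
      exact mul_right_cancel₀ (div_ne_zero hMpos.ne' hRp.ne') hx'
    have hv : v = v' := by
      have hy' : v * max |v| |u| / Real.sqrt (v^2+u^2)
          = v' * max |v'| |u'| / Real.sqrt (v'^2+u'^2) := hy
      rw [max_comm |v| |u|, max_comm |v'| |u'|, show v^2+u^2 = u^2+v^2 by ring,
        show v'^2+u'^2 = u'^2+v'^2 by ring, ← hMM, ← hRR] at hy'
      rw [mul_div_assoc, mul_div_assoc] at hy'
      exact mul_right_cancel₀ (div_ne_zero hMpos.ne' hRp.ne') hy'
    exact ⟨hu, hv⟩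

/-! Circle material -/

noncomputable def cu (z : Circle) : ℝ := (z:ℂ).re
noncomputable def ci (z : Circle) : ℝ := (z:ℂ).im

lemma circle_sq (z : Circle) : cu z ^2 + ci z ^2 = 1 := by
  have := Circle.normSq_coe z
  rw [Complex.normSq_apply] at this
  unfold cu ci; nlinarith

lemma continuous_cu : Continuous cu :=
  Complex.continuous_re.comp continuous_subtype_val

lemma continuous_ci : Continuous ci :=
  Complex.continuous_im.comp continuous_subtype_val

noncomputable def cmk (a b : ℝ) (h : a^2 + b^2 = 1) : Circle :=
  ⟨⟨a, b⟩, by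
    show _ ∈ Metric.sphere _ _
    rw [mem_sphere_zero_iff_norm, Complex.norm_def, Complex.normSq_mk]
    rw [show a * a + b * b = a^2 + b^2 by ring, h, Real.sqrt_one]⟩

@[simp] lemma cu_cmk (a b : ℝ) (h : a^2+b^2 = 1) : cu (cmk a b h) = a := rfl
@[simp] lemma ci_cmk (a b : ℝ) (h : a^2+b^2 = 1) : ci (cmk a b h) = b := rfl

lemma circle_eq {z w : Circle} (h1 : cu z = cu w) (h2 : ci z = ci w) : z = w :=
  Circle.ext (Complex.ext h1 h2)

lemma cu_inv (z : Circle) : cu z⁻¹ = cu z := by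
  unfold cu; rw [Circle.coe_inv_eq_conj, Complex.conj_re]

lemma ci_inv (z : Circle) : ci z⁻¹ = - ci z := by
  unfold ci; rw [Circle.coe_inv_eq_conj, Complex.conj_im]

lemma circle_eq_inv {z w : Circle} (h1 : cu z = cu w) (h2 : ci z = - ci w) : z = w⁻¹ :=
  circle_eq (h1.trans (cu_inv w).symm) (h2.trans (ci_inv w).symm)

/-! The map from the torus to the sphere -/

noncomputable def hmap (p : Circle × Circle) : EuclideanSpace ℝ (Fin 3) :=
  (EuclideanSpace.equiv (Fin 3) ℝ).symm
    ![XX (cu p.1) (cu p.2), XX (cu p.2) (cu p.1), ZZ (cu p.1) (cu p.2) (ci p.1) (ci p.2)]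

lemma hmap_apply (p : Circle × Circle) (i : Fin 3) :
    hmap p i = ![XX (cu p.1) (cu p.2), XX (cu p.2) (cu p.1),
      ZZ (cu p.1) (cu p.2) (ci p.1) (ci p.2)] i := rfl

lemma hmap_mem (p : Circle × Circle) :
    hmap p ∈ Metric.sphere (0 : EuclideanSpace ℝ (Fin 3)) 1 := by
  rw [mem_sphere_zero_iff_norm, EuclideanSpace.norm_eq]
  rw [Fin.sum_univ_three]
  simp only [hmap_apply, Matrix.cons_val_zero, Matrix.cons_val_one, Matrix.head_cons,
    Matrix.cons_val_two, Matrix.tail_cons, Real.norm_eq_abs, sq_abs]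
  rw [norm_id _ _ _ _ (circle_sq p.1) (circle_sq p.2), Real.sqrt_one]

lemma continuous_ZZ : Continuous (fun p : Circle × Circle =>
    ZZ (cu p.1) (cu p.2) (ci p.1) (ci p.2)) := by
  rw [continuous_iff_continuousAt]
  intro p
  have hcu1 : Continuous (fun q : Circle × Circle => cu q.1) := continuous_cu.comp continuous_fst
  have hcu2 : Continuous (fun q : Circle × Circle => cu q.2) := continuous_cu.comp continuous_snd
  have hci1 : Continuous (fun q : Circle × Circle => ci q.1) := continuous_ci.comp continuous_fst
  have hci2 : Continuous (fun q : Circle × Circle => ci q.2) := continuous_ci.comp continuous_snd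
  rcases eq_or_ne (max (1-(cu p.1)^2) (1-(cu p.2)^2)) 0 with h | h
  · have h1 : 1 - (cu p.1)^2 = 0 := by
      have h1a : 1 - (cu p.1)^2 ≤ 0 := h ▸ le_max_left _ _
      nlinarith [circle_sq p.1, sq_nonneg (ci p.1)]
    have hci0 : ci p.1 = 0 := by nlinarith [circle_sq p.1, sq_nonneg (ci p.1)]
    have hZ0 : ZZ (cu p.1) (cu p.2) (ci p.1) (ci p.2) = 0 := by
      unfold ZZ; rw [hci0]; simp
    show Filter.Tendsto _ (nhds p) (nhds (ZZ (cu p.1) (cu p.2) (ci p.1) (ci p.2)))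
    rw [hZ0]
    apply squeeze_zero_norm
      (fun q : Circle × Circle => abs_ZZ_le _ _ _ _ (circle_sq q.1) (circle_sq q.2))
    have : Filter.Tendsto (fun q : Circle × Circle => |ci q.1|) (nhds p) (nhds |ci p.1|) :=
      (hci1.abs).tendsto p
    rw [hci0, abs_zero] at this
    exact this
  · have hnn : 0 ≤ max (1-(cu p.1)^2) (1-(cu p.2)^2) :=
      le_max_of_le_left (by nlinarith [circle_sq p.1, sq_nonneg (ci p.1)])
    have hpos : 0 < max (1-(cu p.1)^2) (1-(cu p.2)^2) := lt_of_le_of_ne hnn (Ne.symm h)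
    unfold ZZ
    apply ContinuousAt.div
    · exact (hci1.mul hci2).continuousAt
    · exact (Real.continuous_sqrt.comp ((continuous_const.sub (hcu1.pow 2)).max
        (continuous_const.sub (hcu2.pow 2)))).continuousAt
    · exact ne_of_gt (Real.sqrt_pos.mpr hpos)

lemma continuous_hmap : Continuous hmap := by
  have hcu1 : Continuous (fun q : Circle × Circle => cu q.1) := continuous_cu.comp continuous_fst
  have hcu2 : Continuous (fun q : Circle × Circle => cu q.2) := continuous_cu.comp continuous_snd
  have hX1 : Continuous (fun q : Circle × Circle => XX (cu q.1) (cu q.2)) :=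
    continuous_XX.comp (hcu1.prodMk hcu2)
  have hX2 : Continuous (fun q : Circle × Circle => XX (cu q.2) (cu q.1)) :=
    continuous_XX.comp (hcu2.prodMk hcu1)
  apply (EuclideanSpace.equiv (Fin 3) ℝ).symm.continuous.comp
  apply continuous_pi
  intro i
  fin_cases i
  · simpa using hX1
  · simpa using hX2
  · simpa using continuous_ZZ

lemma hmap_inv (p : Circle × Circle) : hmap (p.1⁻¹, p.2⁻¹) = hmap p := by
  unfold hmap
  simp only [cu_inv, ci_inv]
  congr 2
  unfold ZZ
  rw [neg_mul_neg]

/-! Injectivity on orbits -/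

lemma hmap_orbit (p q : Circle × Circle) (h : hmap p = hmap q) :
    q = p ∨ q = (p.1⁻¹, p.2⁻¹) := by
  have h0 : hmap p 0 = hmap q 0 := by rw [h]
  have h1 : hmap p 1 = hmap q 1 := by rw [h]
  have h2 : hmap p 2 = hmap q 2 := by rw [h]
  rw [hmap_apply, hmap_apply] at h0 h1 h2
  simp only [Matrix.cons_val_zero, Matrix.cons_val_one, Matrix.head_cons,
    Matrix.cons_val_two, Matrix.tail_cons] at h0 h1 h2
  obtain ⟨huu, hvv⟩ := XX_inj _ _ _ _ h0 h1
  -- recover the product of imaginary parts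
  have ht : ci p.1 * ci p.2 = ci q.1 * ci q.2 := by
    rcases eq_or_ne (max (1-(cu p.1)^2) (1-(cu p.2)^2)) 0 with hm | hm
    · have hA0 : 1 - (cu p.1)^2 = 0 := by
        have h1a : 1 - (cu p.1)^2 ≤ 0 := hm ▸ le_max_left _ _
        nlinarith [circle_sq p.1, sq_nonneg (ci p.1)]
      have e1 : ci p.1 = 0 := by nlinarith [circle_sq p.1, sq_nonneg (ci p.1)]
      have e2 : ci q.1 = 0 := by
        have := circle_sq q.1
        rw [← huu] at this
        nlinarith [sq_nonneg (ci q.1)]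
      rw [e1, e2, zero_mul, zero_mul]
    · have hnn : 0 ≤ max (1-(cu p.1)^2) (1-(cu p.2)^2) :=
        le_max_of_le_left (by nlinarith [circle_sq p.1, sq_nonneg (ci p.1)])
      have hpos : 0 < max (1-(cu p.1)^2) (1-(cu p.2)^2) := lt_of_le_of_ne hnn (Ne.symm hm)
      have hsp : 0 < Real.sqrt (max (1-(cu p.1)^2) (1-(cu p.2)^2)) := Real.sqrt_pos.mpr hpos
      unfold ZZ at h2
      rw [← huu, ← hvv] at h2
      have := (div_eq_div_iff hsp.ne' hsp.ne').mp h2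
      exact mul_right_cancel₀ hsp.ne' this
  -- sign analysis
  have hs1 : ci q.1 = ci p.1 ∨ ci q.1 = - ci p.1 := by
    have hsq : ci q.1 ^2 = ci p.1 ^2 := by
      have := circle_sq q.1; have := circle_sq p.1
      rw [← huu] at *
      nlinarith
    have : (ci q.1 - ci p.1) * (ci q.1 + ci p.1) = 0 := by nlinarith
    rcases mul_eq_zero.mp this with hc | hc
    · left; linarith
    · right; linarith
  have hs2 : ci q.2 = ci p.2 ∨ ci q.2 = - ci p.2 := by
    have hsq : ci q.2 ^2 = ci p.2 ^2 := by
      have := circle_sq q.2; have := circle_sq p.2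
      rw [← hvv] at *
      nlinarith
    have : (ci q.2 - ci p.2) * (ci q.2 + ci p.2) = 0 := by nlinarith
    rcases mul_eq_zero.mp this with hc | hc
    · left; linarith
    · right; linarith
  rcases hs1 with e1 | e1 <;> rcases hs2 with e2 | e2
  · left
    exact Prod.ext (circle_eq huu.symm e1).symm.symm (circle_eq hvv.symm e2).symm.symm
  · -- ci q.1 = ci p.1, ci q.2 = -ci p.2 : then ci p.1 * ci p.2 = ci p.1 * (-ci p.2)
    have hz : ci p.1 * ci p.2 = 0 := by
      rw [e1, e2] at ht; nlinarith
    rcases mul_eq_zero.mp hz with hc | hc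
    · -- ci p.1 = 0 : q = p⁻¹
      right
      have e1' : ci q.1 = - ci p.1 := by rw [e1, hc, neg_zero]
      exact Prod.ext (circle_eq_inv huu.symm e1') (circle_eq_inv hvv.symm e2)
    · -- ci p.2 = 0 : q = p
      left
      have e2' : ci q.2 = ci p.2 := by rw [e2, hc, neg_zero]
      exact Prod.ext (circle_eq huu.symm e1) (circle_eq hvv.symm e2')
  · have hz : ci p.1 * ci p.2 = 0 := by
      rw [e1, e2] at ht; nlinarith
    rcases mul_eq_zero.mp hz with hc | hc
    · left
      have e1' : ci q.1 = ci p.1 := by rw [e1, hc, neg_zero]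
      exact Prod.ext (circle_eq huu.symm e1') (circle_eq hvv.symm e2)
    · right
      have e2' : ci q.2 = - ci p.2 := by rw [e2, hc, neg_zero]
      exact Prod.ext (circle_eq_inv (huu.symm) e1) (circle_eq_inv (hvv.symm) e2')
  · right
    exact Prod.ext (circle_eq_inv (huu.symm) e1) (circle_eq_inv (hvv.symm) e2)

/-! Surjectivity -/

set_option maxHeartbeats 1000000 in
lemma hmap_surj (y : EuclideanSpace ℝ (Fin 3))
    (hy : y ∈ Metric.sphere (0 : EuclideanSpace ℝ (Fin 3)) 1) :
    ∃ p : Circle × Circle, hmap p = y := by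
  have hnorm : (y 0)^2 + (y 1)^2 + (y 2)^2 = 1 := by
    rw [mem_sphere_zero_iff_norm, EuclideanSpace.norm_eq, Fin.sum_univ_three] at hy
    have h0 : (0:ℝ) ≤ ‖y 0‖^2 + ‖y 1‖^2 + ‖y 2‖^2 := by positivity
    have := Real.sq_sqrt h0
    rw [hy, one_pow] at this
    simp only [Real.norm_eq_abs, sq_abs] at this
    linarith
  set x := y 0 with hx
  set yy := y 1 with hyy
  set z := y 2 with hz
  by_cases hm : x = 0 ∧ yy = 0
  · obtain ⟨hx0, hy0⟩ := hm
    have hz2 : z^2 = 1 := by rw [hx0, hy0] at hnorm; nlinarith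
    refine ⟨(cmk 0 1 (by norm_num), cmk 0 z (by rw [hz2]; norm_num)), ?_⟩
    ext i
    rw [hmap_apply]
    fin_cases i
    · simp [XX, hx0]
      rw [← hx, hx0]
    · simp [XX, hy0]
      rw [← hyy, hy0]
    · simp only [Matrix.cons_val_two, Matrix.tail_cons, Matrix.head_cons, cu_cmk, ci_cmk]
      unfold ZZ
      norm_num
      exact hz.symm
  · have hm2 : 0 < x^2 + yy^2 := by
      rcases not_and_or.mp hm with hc | hc
      · have : x^2 > 0 := by positivity
        nlinarith [sq_nonneg yy]
      · have : yy^2 > 0 := by positivity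
        nlinarith [sq_nonneg x]
    set m := Real.sqrt (x^2 + yy^2) with hmdef
    have hmpos : 0 < m := Real.sqrt_pos.mpr hm2
    have hmsq : m^2 = x^2 + yy^2 := Real.sq_sqrt hm2.le
    have hmle : m ≤ 1 := by
      rw [hmdef]
      rw [show (1:ℝ) = Real.sqrt 1 by rw [Real.sqrt_one]]
      exact Real.sqrt_le_sqrt (by nlinarith [sq_nonneg z])
    set M := max |x| |yy| with hMdef
    have hMpos : 0 < M := by
      rcases not_and_or.mp hm with hc | hc
      · exact lt_of_lt_of_le (abs_pos.mpr hc) (le_max_left _ _)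
      · exact lt_of_lt_of_le (abs_pos.mpr hc) (le_max_right _ _)
    set s := m / M with hsdef
    have hspos : 0 < s := div_pos hmpos hMpos
    set u := s * x with hudef
    set v := s * yy with hvdef
    -- max |u| |v| = m  and  sqrt(u^2+v^2) = s * m
    have hmaxuv : max |u| |v| = m := by
      have h1 : |u| = s * |x| := by rw [hudef, abs_mul, abs_of_pos hspos]
      have h2 : |v| = s * |yy| := by rw [hvdef, abs_mul, abs_of_pos hspos]
      rw [h1, h2]
      have hdist : max (s * |x|) (s * |yy|) = s * max |x| |yy| := by
        rcases le_total |x| |yy| with hc | hc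
        · rw [max_eq_right (mul_le_mul_of_nonneg_left hc hspos.le), max_eq_right hc]
        · rw [max_eq_left (mul_le_mul_of_nonneg_left hc hspos.le), max_eq_left hc]
      rw [hdist, ← hMdef, hsdef]
      exact div_mul_cancel₀ m hMpos.ne'
    have hsqrtuv : Real.sqrt (u^2+v^2) = s * m := by
      rw [hudef, hvdef, show (s*x)^2 + (s*yy)^2 = (s*m)^2 by
        rw [mul_pow s m, hmsq]; ring]
      exact Real.sqrt_sq (by positivity)
    have humax : u^2 ≤ 1 := by
      have : |u| ≤ m := hmaxuv ▸ le_max_left |u| |v|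
      nlinarith [abs_nonneg u, sq_abs u]
    have hvmax : v^2 ≤ 1 := by
      have : |v| ≤ m := hmaxuv ▸ le_max_right |u| |v|
      nlinarith [abs_nonneg v, sq_abs v]
    set s1 := Real.sqrt (1 - u^2) with hs1def
    set σ : ℝ := if 0 ≤ z then 1 else -1 with hσdef
    set s2 := σ * Real.sqrt (1 - v^2) with hs2def
    have hs1sq : s1^2 = 1 - u^2 := Real.sq_sqrt (by linarith)
    have hσsq : σ^2 = 1 := by
      rw [hσdef]; split <;> norm_num
    have hs2sq : s2^2 = 1 - v^2 := by
      rw [hs2def, mul_pow, hσsq, one_mul]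
      exact Real.sq_sqrt (by linarith)
    refine ⟨(cmk u s1 (by rw [hs1sq]; ring), cmk v s2 (by rw [hs2sq]; ring)), ?_⟩
    -- the key quantity : max (u^2) (v^2) = m^2
    have hmaxsq : max (u^2) (v^2) = m^2 := by
      rw [← sq_max_abs, hmaxuv]
    have hzsq : z^2 = 1 - m^2 := by nlinarith
    ext i
    rw [hmap_apply]
    fin_cases i
    · simp only [Matrix.cons_val_zero, cu_cmk]
      show XX u v = x
      unfold XX
      rw [hmaxuv, hsqrtuv, hudef]
      field_simp
    · simp only [Matrix.cons_val_one, Matrix.head_cons, cu_cmk]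
      show XX v u = yy
      unfold XX
      rw [max_comm |v| |u|, hmaxuv, show v^2+u^2 = u^2+v^2 by ring, hsqrtuv, hvdef]
      field_simp
    · simp only [Matrix.cons_val_two, Matrix.tail_cons, Matrix.head_cons, cu_cmk, ci_cmk]
      show ZZ u v s1 s2 = z
      unfold ZZ
      rcases eq_or_ne (max (1-u^2) (1-v^2)) 0 with hc | hc
      · have hA0 : 1 - u^2 = 0 := le_antisymm (hc ▸ le_max_left _ _) (by linarith)
        have hB0 : 1 - v^2 = 0 := le_antisymm (hc ▸ le_max_right _ _) (by linarith)
        have hz0 : z = 0 := by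
          have : max (u^2) (v^2) = 1 := by
            rw [max_eq_left (by linarith)]; linarith
          nlinarith
        rw [hc, Real.sqrt_zero, div_zero, hz0]
      · have hpos : 0 < max (1-u^2) (1-v^2) :=
          lt_of_le_of_ne (le_max_of_le_left (by linarith)) (Ne.symm hc)
        have hminz : min (1-u^2) (1-v^2) = z^2 := by
          rcases le_total (u^2) (v^2) with hcc | hcc
          · rw [min_eq_right (by linarith)]
            rw [max_eq_right hcc] at hmaxsq
            linarith
          · rw [min_eq_left (by linarith)]
            rw [max_eq_left hcc] at hmaxsq
            linarith
        have hprod : (1-u^2) * (1-v^2) / max (1-u^2) (1-v^2) = z^2 := by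
          rcases le_total (1-u^2) (1-v^2) with hcc | hcc
          · rw [max_eq_right hcc] at *
            rw [min_eq_left hcc] at hminz
            rw [mul_div_assoc, div_self (by linarith), mul_one, hminz]
          · rw [max_eq_left hcc] at *
            rw [min_eq_right hcc] at hminz
            rw [mul_comm, mul_div_assoc, div_self (by linarith), mul_one, hminz]
        have hcalc : s1 * s2 = σ * Real.sqrt ((1-u^2) * (1-v^2)) := by
          rw [hs1def, hs2def, Real.sqrt_mul (by linarith)]
          ring
        rw [hcalc, mul_div_assoc, ← Real.sqrt_div (mul_nonneg (by linarith : (0:ℝ) ≤ 1-u^2) (by linarith : (0:ℝ) ≤ 1-v^2)), hprod,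
          Real.sqrt_sq_eq_abs]
        rw [hσdef]
        split
        · rw [one_mul, abs_of_nonneg (by assumption)]
        · rw [neg_one_mul, abs_of_neg (by linarith [not_le.mp (by assumption)])]
          ring

noncomputable def hS (p : Circle × Circle) :
    Metric.sphere (0 : EuclideanSpace ℝ (Fin 3)) 1 := ⟨hmap p, hmap_mem p⟩

noncomputable def Fmap :
    (Quot fun p q : Circle × Circle => q = (p.1⁻¹, p.2⁻¹)) →
      Metric.sphere (0 : EuclideanSpace ℝ (Fin 3)) 1 :=
  Quot.lift hS (by
    intro a b hab
    apply Subtype.ext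
    show hmap a = hmap b
    rw [hab]
    exact (hmap_inv a).symm)

lemma Fmap_cont : Continuous Fmap :=
  continuous_quot_lift _ (continuous_hmap.subtype_mk _)

lemma Fmap_bij : Function.Bijective Fmap := by
  constructor
  · intro a b
    induction a using Quot.ind with
    | _ p =>
    induction b using Quot.ind with
    | _ q =>
    intro hpq
    have hm : hmap p = hmap q := congrArg Subtype.val hpq
    rcases hmap_orbit p q hm with hc | hc
    · rw [hc]
    · rw [hc]
      exact Quot.sound rfl
  · intro y
    obtain ⟨p, hp⟩ := hmap_surj y.1 y.2
    exact ⟨Quot.mk _ p, Subtype.ext hp⟩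

/-- The quotient of the torus `S¹ × S¹` by the `ℤ/2`-action
`(λ, μ) ↦ (λ⁻¹, μ⁻¹)` is homeomorphic to the 2-sphere `S²`. -/
theorem pillowcase_homeomorph_sphere :
    Nonempty
      ((Quot fun p q : Circle × Circle => q = (p.1⁻¹, p.2⁻¹)) ≃ₜ
        Metric.sphere (0 : EuclideanSpace ℝ (Fin 3)) 1) :=
  ⟨Continuous.homeoOfEquivCompactToT2 (f := Equiv.ofBijective Fmap Fmap_bij) Fmap_cont⟩
end

section
/- Let H: ℂ² × [0,1] → ℂ², defined in polar coordinates a = r·e^{iα}, d = s·e^{iβ} by H_t(a, d) = (h_t¹(r,s)·e^{iα}, h_t²(r,s)·e^{iβ}), where h_t¹(r,s) = (1−t)r + t√(rs) if r ≥ s and rs/((1−t)s + t√(rs)) if s > r, and h_t²(r,s) = rs/((1−t)r + t√(rs)) if r > s and (1−t)s + t√(rs) if s ≥ r. Then: (i) H₀ = id; (ii) H₁(a,d) lies in the set {|a| = |d|}; (iii) H_t fixes {|a| = |d|} pointwise for all t; (iv) H_t preserves the set {(a,d) : |a|·|d| = 1}, i.e. if |a||d| = 1 then |H_t(a,d)₁|·|H_t(a,d)₂|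 = 1 for all t; and H is continuous. -/
open Complex

noncomputable section

/-- `h_t¹(r,s)`: first radial component of the homotopy. -/
def h1 (t r s : ℝ) : ℝ :=
  if s ≤ r then (1 - t) * r + t * Real.sqrt (r * s)
  else r * s / ((1 - t) * s + t * Real.sqrt (r * s))

/-- `h_t²(r,s)`: second radial component of the homotopy. -/
def h2 (t r s : ℝ) : ℝ :=
  if r ≤ s then (1 - t) * s + t * Real.sqrt (r * s)
  else r * s / ((1 - t) * r + t * Real.sqrt (r * s))

/-- The homotopy `H_t(a, d) = (h_t¹(r,s)·e^{iα}, h_t²(r,s)·e^{iβ})`, where `a = r·e^{iα}`,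
`d = s·e^{iβ}` in polar coordinates. -/
def Hretract (t : ℝ) (p : ℂ × ℂ) : ℂ × ℂ :=
  ((h1 t (‖p.1‖) (‖p.2‖) : ℂ) * Complex.exp (p.1.arg * Complex.I),
   (h2 t (‖p.1‖) (‖p.2‖) : ℂ) * Complex.exp (p.2.arg * Complex.I))

/- ### Auxiliary lemmas -/

lemma h2_eq_h1 (t r s : ℝ) : h2 t r s = h1 t s r := by
  unfold h1 h2
  rw [mul_comm r s]

lemma h1_zero {r : ℝ} (hr : 0 ≤ r) (s : ℝ) : h1 0 r s = r := by
  unfold h1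
  split
  · ring
  · rename_i h
    have hs : 0 < s := lt_of_le_of_lt hr (not_le.1 h)
    rw [show (1 - (0:ℝ)) * s + 0 * Real.sqrt (r * s) = s by ring]
    field_simp

lemma h1_one {r s : ℝ} (hr : 0 ≤ r) (hs : 0 ≤ s) : h1 1 r s = Real.sqrt (r * s) := by
  unfold h1
  split
  · ring
  · rw [show (1 - (1:ℝ)) * s + 1 * Real.sqrt (r * s) = Real.sqrt (r * s) by ring]
    exact Real.div_sqrt

lemma h1_diag {r : ℝ} (hr : 0 ≤ r) (t : ℝ) : h1 t r r = r := by
  unfold h1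
  rw [if_pos le_rfl, Real.sqrt_mul_self hr]
  ring

lemma h1_nonneg {t r s : ℝ} (ht0 : 0 ≤ t) (ht1 : t ≤ 1) (hr : 0 ≤ r) (hs : 0 ≤ s) :
    0 ≤ h1 t r s := by
  unfold h1
  split
  · exact add_nonneg (mul_nonneg (by linarith) hr) (mul_nonneg ht0 (Real.sqrt_nonneg _))
  · exact div_nonneg (mul_nonneg hr hs)
      (add_nonneg (mul_nonneg (by linarith) hs) (mul_nonneg ht0 (Real.sqrt_nonneg _)))

lemma sqrt_le_right {r s : ℝ} (hr : 0 ≤ r) (hrs : r ≤ s) : Real.sqrt (r * s) ≤ s := by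
  have hs : 0 ≤ s := hr.trans hrs
  calc Real.sqrt (r * s) ≤ Real.sqrt (s * s) :=
        Real.sqrt_le_sqrt (mul_le_mul_of_nonneg_right hrs hs)
    _ = s := Real.sqrt_mul_self hs

lemma h1_le {t r s : ℝ} (ht0 : 0 ≤ t) (ht1 : t ≤ 1) (hr : 0 ≤ r) (hs : 0 ≤ s) :
    h1 t r s ≤ r + Real.sqrt (r * s) := by
  unfold h1
  split
  · have h1' : (1 - t) * r ≤ r := by nlinarith
    have h2' : t * Real.sqrt (r * s) ≤ Real.sqrt (r * s) := by
      nlinarith [Real.sqrt_nonneg (r * s)]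
    linarith
  · rename_i h
    have hrs : r ≤ s := (not_le.1 h).le
    have hw : Real.sqrt (r * s) ≤ (1 - t) * s + t * Real.sqrt (r * s) := by
      nlinarith [sqrt_le_right hr hrs, Real.sqrt_nonneg (r * s)]
    have hq : r * s / ((1 - t) * s + t * Real.sqrt (r * s)) ≤ Real.sqrt (r * s) := by
      rcases eq_or_lt_of_le (le_trans (Real.sqrt_nonneg _) hw) with hw0 | hw0
      · rw [← hw0]
        simp [Real.sqrt_nonneg]
      · rw [div_le_iff₀ hw0]
        have : r * s = Real.sqrt (r * s) * Real.sqrt (r * s) :=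
          (Real.mul_self_sqrt (mul_nonneg hr hs)).symm
        nlinarith [Real.sqrt_nonneg (r * s)]
    nlinarith [Real.sqrt_nonneg (r * s)]

lemma conv_pos {t x y : ℝ} (ht0 : 0 ≤ t) (ht1 : t ≤ 1) (hx : 0 < x) (hy : 0 < y) :
    0 < (1 - t) * x + t * y := by
  rcases eq_or_lt_of_le ht1 with h | h
  · subst h; simpa using hy
  · exact add_pos_of_pos_of_nonneg (mul_pos (by linarith) hx) (mul_nonneg ht0 hy.le)

lemma h1_mul_h2 {t r s : ℝ} (ht0 : 0 ≤ t) (ht1 : t ≤ 1) (hr : 0 < r) (hs : 0 < s) :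
    h1 t r s * h2 t r s = r * s := by
  have hsqrt : 0 < Real.sqrt (r * s) := Real.sqrt_pos.2 (mul_pos hr hs)
  unfold h1 h2
  rcases lt_trichotomy r s with h | h | h
  · rw [if_neg (not_le.2 h), if_pos h.le]
    have hw : 0 < (1 - t) * s + t * Real.sqrt (r * s) := conv_pos ht0 ht1 hs hsqrt
    exact div_mul_cancel₀ _ hw.ne'
  · subst h
    rw [if_pos le_rfl, Real.sqrt_mul_self hr.le]
    ring
  · rw [if_pos h.le, if_neg (not_le.2 h)]
    have hw : 0 < (1 - t) * r + t * Real.sqrt (r * s) := conv_pos ht0 ht1 hr hsqrt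
    rw [mul_comm]
    exact div_mul_cancel₀ _ hw.ne'

lemma abs_radial (x θ : ℝ) : ‖((x : ℂ) * Complex.exp ((θ : ℂ) * Complex.I))‖ = |x| := by
  rw [norm_mul, Complex.norm_real, Real.norm_eq_abs, Complex.norm_exp_ofReal_mul_I, mul_one]

/- ### Continuity of `h1` -/

lemma h1_cont :
    ContinuousOn (fun x : ℝ × ℝ × ℝ => h1 x.1 x.2.1 x.2.2)
      (Set.Icc (0:ℝ) 1 ×ˢ (Set.Ici (0:ℝ) ×ˢ Set.Ici (0:ℝ))) := by
  set S : Set (ℝ × ℝ × ℝ) := Set.Icc (0:ℝ) 1 ×ˢ (Set.Ici (0:ℝ) ×ˢ Set.Ici (0:ℝ)) with hS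
  set f : ℝ × ℝ × ℝ → ℝ := fun x => (1 - x.1) * x.2.1 + x.1 * Real.sqrt (x.2.1 * x.2.2) with hf
  set g : ℝ × ℝ × ℝ → ℝ :=
    fun x => x.2.1 * x.2.2 / ((1 - x.1) * x.2.2 + x.1 * Real.sqrt (x.2.1 * x.2.2)) with hg
  have hF : ∀ x : ℝ × ℝ × ℝ, h1 x.1 x.2.1 x.2.2 = if x.2.2 ≤ x.2.1 then f x else g x := by
    intro x; rfl
  have hfc : Continuous f := by fun_prop
  have hgnum : Continuous fun x : ℝ × ℝ × ℝ => x.2.1 * x.2.2 := by fun_prop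
  have hgden : Continuous fun x : ℝ × ℝ × ℝ =>
      (1 - x.1) * x.2.2 + x.1 * Real.sqrt (x.2.1 * x.2.2) := by fun_prop
  intro x hx
  have ht0 : (0:ℝ) ≤ x.1 := hx.1.1
  have ht1 : x.1 ≤ 1 := hx.1.2
  have hr : (0:ℝ) ≤ x.2.1 := hx.2.1
  have hs : (0:ℝ) ≤ x.2.2 := hx.2.2
  rcases lt_or_ge x.2.2 x.2.1 with hlt | hle
  · -- s < r : eventually the first branch
    have hev : (fun y : ℝ × ℝ × ℝ => h1 y.1 y.2.1 y.2.2) =ᶠ[nhds x] f := by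
      have hopen : IsOpen {y : ℝ × ℝ × ℝ | y.2.2 < y.2.1} :=
        isOpen_lt (by fun_prop) (by fun_prop)
      filter_upwards [hopen.mem_nhds hlt] with y hy
      rw [hF y, if_pos hy.le]
    exact (hfc.continuousAt.congr hev.symm).continuousWithinAt
  · by_cases hr0 : x.2.1 = 0
    · -- r = 0 : squeeze to 0
      have hval : h1 x.1 x.2.1 x.2.2 = 0 := by
        rw [hF x]
        split
        · rename_i h
          have : x.2.2 = 0 := le_antisymm (hr0 ▸ h) hs
          simp [hf, hr0, this]
        · simp [hg, hr0]
      have hbc : Continuous fun y : ℝ × ℝ × ℝ => y.2.1 + Real.sqrt (y.2.1 * y.2.2) := by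
        fun_prop
      have hb0 : x.2.1 + Real.sqrt (x.2.1 * x.2.2) = 0 := by
        simp [hr0]
      show Filter.Tendsto (fun y : ℝ × ℝ × ℝ => h1 y.1 y.2.1 y.2.2) (nhdsWithin x S)
        (nhds (h1 x.1 x.2.1 x.2.2))
      rw [hval]
      refine squeeze_zero' (g := fun y : ℝ × ℝ × ℝ => y.2.1 + Real.sqrt (y.2.1 * y.2.2)) ?_ ?_ ?_
      · filter_upwards [self_mem_nhdsWithin] with y hy
        exact h1_nonneg hy.1.1 hy.1.2 hy.2.1 hy.2.2
      · filter_upwards [self_mem_nhdsWithin] with y hy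
        exact h1_le hy.1.1 hy.1.2 hy.2.1 hy.2.2
      · have := (hbc.tendsto x).mono_left (nhdsWithin_le_nhds (s := S))
        rwa [hb0] at this
    · have hrpos : 0 < x.2.1 := lt_of_le_of_ne hr (Ne.symm hr0)
      have hspos : 0 < x.2.2 := lt_of_lt_of_le hrpos hle
      have hsqrt : 0 < Real.sqrt (x.2.1 * x.2.2) := Real.sqrt_pos.2 (mul_pos hrpos hspos)
      have hden : (1 - x.1) * x.2.2 + x.1 * Real.sqrt (x.2.1 * x.2.2) ≠ 0 :=
        (conv_pos ht0 ht1 hspos hsqrt).ne'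
      have hgc : ContinuousAt g x := ContinuousAt.div hgnum.continuousAt hgden.continuousAt hden
      rcases eq_or_lt_of_le hle with heq | hlt
      · -- r = s : squeeze between min and max
        have hfx : f x = x.2.1 := by
          simp only [hf, ← heq, Real.sqrt_mul_self hr]
          ring
        have hgx : g x = x.2.1 := by
          simp only [hg, ← heq, Real.sqrt_mul_self hr]
          rw [show (1 - x.1) * x.2.1 + x.1 * x.2.1 = x.2.1 by ring]
          field_simp
        have hvx : h1 x.1 x.2.1 x.2.2 = x.2.1 := by
          rw [hF x, if_pos heq.symm.le, hfx]
        show Filter.Tendsto (fun y : ℝ × ℝ × ℝ => h1 y.1 y.2.1 y.2.2) (nhdsWithin x S)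
          (nhds (h1 x.1 x.2.1 x.2.2))
        rw [hvx]
        refine tendsto_of_tendsto_of_tendsto_of_le_of_le'
          (g := fun y => min (f y) (g y)) (h := fun y => max (f y) (g y)) ?_ ?_ ?_ ?_
        · have : Filter.Tendsto (fun y => min (f y) (g y)) (nhds x) (nhds (min (f x) (g x))) :=
            (hfc.continuousAt.tendsto).min hgc.tendsto
          rw [hfx, hgx, min_self] at this
          exact this.mono_left nhdsWithin_le_nhds
        · have : Filter.Tendsto (fun y => max (f y) (g y)) (nhds x) (nhds (max (f x) (g x))) :=
            (hfc.continuousAt.tendsto).max hgc.tendsto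
          rw [hfx, hgx, max_self] at this
          exact this.mono_left nhdsWithin_le_nhds
        · refine Filter.Eventually.of_forall fun y => ?_
          rw [hF y]
          split
          · exact min_le_left _ _
          · exact min_le_right _ _
        · refine Filter.Eventually.of_forall fun y => ?_
          rw [hF y]
          split
          · exact le_max_left _ _
          · exact le_max_right _ _
      · -- r < s : eventually the second branch
        have hev : (fun y : ℝ × ℝ × ℝ => h1 y.1 y.2.1 y.2.2) =ᶠ[nhds x] g := by
          have hopen : IsOpen {y : ℝ × ℝ × ℝ | y.2.1 < y.2.2} :=
            isOpen_lt (by fun_prop) (by fun_prop)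
          filter_upwards [hopen.mem_nhds hlt] with y hy
          rw [hF y, if_neg (not_le.2 hy)]
        exact (hgc.congr hev.symm).continuousWithinAt

/- ### Continuity of the first component map -/

lemma cont_comp :
    ContinuousOn (fun q : (ℂ × ℂ) × ℝ =>
      ((h1 q.2 (‖q.1.1‖) (‖q.1.2‖) : ℂ) *
        Complex.exp ((q.1.1.arg : ℂ) * Complex.I)))
      (Set.univ ×ˢ Set.Icc (0 : ℝ) 1) := by
  set U : Set ((ℂ × ℂ) × ℝ) := Set.univ ×ˢ Set.Icc (0 : ℝ) 1 with hU
  set G : (ℂ × ℂ) × ℝ → ℝ := fun q => h1 q.2 (‖q.1.1‖) (‖q.1.2‖) with hG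
  have hm : Continuous fun q : (ℂ × ℂ) × ℝ =>
      ((q.2, (‖q.1.1‖, ‖q.1.2‖)) : ℝ × ℝ × ℝ) :=
    continuous_snd.prodMk ((continuous_norm.comp continuous_fst.fst).prodMk
      (continuous_norm.comp continuous_fst.snd))
  have hGc : ContinuousOn G U := by
    refine h1_cont.comp hm.continuousOn ?_
    intro q hq
    exact ⟨hq.2, norm_nonneg _, norm_nonneg _⟩
  intro q hq
  by_cases ha : q.1.1 = 0
  · -- a = 0 : squeeze norm to 0
    have hG0 : G q = 0 := by
      have : h1 q.2 0 (‖q.1.2‖) = 0 := by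
        unfold h1
        split
        · rename_i h
          have h2 : ‖q.1.2‖ = 0 := le_antisymm h (norm_nonneg _)
          simp [h2]
        · simp
      simpa [hG, ha] using this
    have hval : ((G q : ℂ) * Complex.exp ((q.1.1.arg : ℂ) * Complex.I)) = 0 := by
      rw [hG0]; simp
    show Filter.Tendsto (fun y : (ℂ × ℂ) × ℝ => ((G y : ℂ) *
        Complex.exp ((y.1.1.arg : ℂ) * Complex.I))) (nhdsWithin q U)
      (nhds ((G q : ℂ) * Complex.exp ((q.1.1.arg : ℂ) * Complex.I)))
    rw [hval]
    refine squeeze_zero_norm' (a := G) ?_ ?_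
    · filter_upwards [self_mem_nhdsWithin] with y hy
      have hnn : 0 ≤ G y :=
        h1_nonneg hy.2.1 hy.2.2 (norm_nonneg _) (norm_nonneg _)
      calc ‖(G y : ℂ) * Complex.exp ((y.1.1.arg : ℂ) * Complex.I)‖
          = |G y| := abs_radial _ _
        _ = G y := _root_.abs_of_nonneg hnn
        _ ≤ G y := le_rfl
    · have h' : Filter.Tendsto G (nhdsWithin q U) (nhds (G q)) := hGc q hq
      rwa [hG0] at h'
  · -- a ≠ 0 : the function agrees near q with a continuous one
    have habs : (‖q.1.1‖ : ℂ) ≠ 0 := by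
      simpa using (norm_ne_zero_iff.mpr ha)
    have hN : ContinuousWithinAt
        (fun y : (ℂ × ℂ) × ℝ => (G y : ℂ) * (y.1.1 / (‖y.1.1‖ : ℂ))) U q := by
      refine ContinuousWithinAt.mul ?_ ?_
      · exact (Complex.continuous_ofReal.comp_continuousOn hGc) q hq
      · refine (ContinuousAt.div continuousAt_fst.fst ?_ habs).continuousWithinAt
        exact (Complex.continuous_ofReal.comp
          (continuous_norm.comp (continuous_fst.fst))).continuousAt
    refine hN.congr_of_eventuallyEq ?_ ?_
    · have hopen : IsOpen {y : (ℂ × ℂ) × ℝ | y.1.1 ≠ 0} :=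
        isOpen_ne_fun (by fun_prop) continuous_const
      refine eventually_nhdsWithin_of_eventually_nhds ?_
      filter_upwards [hopen.mem_nhds ha] with y hy
      have habs' : (‖y.1.1‖ : ℂ) ≠ 0 := by
        simpa using (norm_ne_zero_iff.mpr hy)
      have heq : Complex.exp ((y.1.1.arg : ℂ) * Complex.I) = y.1.1 / (‖y.1.1‖ : ℂ) := by
        rw [eq_div_iff habs', mul_comm]
        exact Complex.norm_mul_exp_arg_mul_I y.1.1
      rw [heq]
    · have : Complex.exp ((q.1.1.arg : ℂ) * Complex.I) = q.1.1 / (‖q.1.1‖ : ℂ) := by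
        rw [eq_div_iff habs, mul_comm]
        exact Complex.norm_mul_exp_arg_mul_I q.1.1
      rw [this]

/-- The homotopy `H` is continuous on `ℂ² × [0,1]`, satisfies `H₀ = id`,
`H₁` lands in `{|a| = |d|}`, fixes `{|a| = |d|}` pointwise, and preserves the set
`{|a|·|d| = 1}`. -/
theorem Hretract_properties :
    ContinuousOn (fun q : (ℂ × ℂ) × ℝ => Hretract q.2 q.1)
      (Set.univ ×ˢ Set.Icc (0 : ℝ) 1) ∧
    (∀ p : ℂ × ℂ, Hretract 0 p = p) ∧
    (∀ p : ℂ × ℂ, ‖(Hretract 1 p).1‖ = ‖(Hretract 1 p).2‖) ∧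
    (∀ t ∈ Set.Icc (0 : ℝ) 1, ∀ p : ℂ × ℂ,
      ‖p.1‖ = ‖p.2‖ → Hretract t p = p) ∧
    (∀ t ∈ Set.Icc (0 : ℝ) 1, ∀ p : ℂ × ℂ,
      ‖p.1‖ * ‖p.2‖ = 1 →
        ‖(Hretract t p).1‖ * ‖(Hretract t p).2‖ = 1) := by
  refine ⟨?_, ?_, ?_, ?_, ?_⟩
  · -- continuity
    have h2' : ContinuousOn (fun q : (ℂ × ℂ) × ℝ =>
        ((h2 q.2 (‖q.1.1‖) (‖q.1.2‖) : ℂ) *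
          Complex.exp ((q.1.2.arg : ℂ) * Complex.I)))
        (Set.univ ×ˢ Set.Icc (0 : ℝ) 1) := by
      have hσ : Continuous fun q : (ℂ × ℂ) × ℝ => (((q.1.2, q.1.1), q.2) : (ℂ × ℂ) × ℝ) := by
        fun_prop
      have := cont_comp.comp hσ.continuousOn
        (fun q (hq : q ∈ Set.univ ×ˢ Set.Icc (0:ℝ) 1) =>
          (⟨Set.mem_univ _, hq.2⟩ : _ ∈ Set.univ ×ˢ Set.Icc (0:ℝ) 1))
      refine this.congr fun q hq => ?_
      simp only [Function.comp]
      rw [h2_eq_h1]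
    exact cont_comp.prodMk h2'
  · -- H₀ = id
    intro p
    unfold Hretract
    rw [h1_zero (norm_nonneg _) _, h2_eq_h1, h1_zero (norm_nonneg _) _]
    exact Prod.ext (Complex.norm_mul_exp_arg_mul_I p.1) (Complex.norm_mul_exp_arg_mul_I p.2)
  · -- H₁ lands on the diagonal
    intro p
    unfold Hretract
    rw [h1_one (norm_nonneg _) (norm_nonneg _), h2_eq_h1,
      h1_one (norm_nonneg _) (norm_nonneg _), mul_comm (‖p.2‖)]
    simp [abs_radial]
  · -- fixes the diagonal
    intro t ht p hp
    unfold Hretract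
    rw [hp, h1_diag (norm_nonneg _), h2_eq_h1, h1_diag (norm_nonneg _), ← hp]
    exact Prod.ext (Complex.norm_mul_exp_arg_mul_I p.1)
      (by rw [hp]; exact Complex.norm_mul_exp_arg_mul_I p.2)
  · -- preserves |a||d| = 1
    intro t ht p hp
    have hr : 0 < ‖p.1‖ := by
      rcases (norm_nonneg p.1).lt_or_eq with h | h
      · exact h
      · exfalso; rw [← h] at hp; simp at hp
    have hs : 0 < ‖p.2‖ := by
      rcases (norm_nonneg p.2).lt_or_eq with h | h
      · exact h
      · exfalso; rw [← h] at hp; simp at hp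
    unfold Hretract
    rw [abs_radial, abs_radial,
      _root_.abs_of_nonneg (h1_nonneg ht.1 ht.2 hr.le hs.le),
      _root_.abs_of_nonneg (by rw [h2_eq_h1]; exact h1_nonneg ht.1 ht.2 hs.le hr.le),
      h1_mul_h2 ht.1 ht.2 hr hs, hp]

end
end

section
/- The map H: {(a,d) ∈ ℂ² : |a| = |d|} × [0,1] → ℂ² given by H_t(a, d) = (a, (1−t)d + t·|d|·e^{−i·arg(a)}) when a ≠ 0 (equivalently H_t(a,d) = (a, (1−t)d + t·(|d|/|a|)·ā)) and H_t(0,0) = (0,0), is a continuous homotopy with H₀ = id, H₁(a,d) = (a, ā), and H_t(a, ā) = (a, ā) for all t. -/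
open Complex

noncomputable section

/-- The homotopy `H_t(a, d) = (a, (1−t)d + t·(|d|/|a|)·ā)` for `a ≠ 0`, and
`H_t(0,0) = (0,0)`; defined on the locus `{|a| = |d|}`. -/
def Hangle (t : ℝ) (p : ℂ × ℂ) : ℂ × ℂ :=
  if p.1 = 0 then (0, 0)
  else (p.1, (1 - t) * p.2 +
    (t : ℂ) * ((‖p.2‖ / ‖p.1‖ : ℝ) : ℂ) * (starRingEnd ℂ) p.1)

/-- Second-component formula. -/
def Dangle (t : ℝ) (p : ℂ × ℂ) : ℂ :=
  if p.1 = 0 then 0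
  else (1 - t) * p.2 + (t : ℂ) * ((‖p.2‖ / ‖p.1‖ : ℝ) : ℂ) * (starRingEnd ℂ) p.1

lemma Hangle_eq (t : ℝ) (p : ℂ × ℂ) : Hangle t p = (p.1, Dangle t p) := by
  unfold Hangle Dangle
  split_ifs with h <;> simp [h]

lemma Dangle_norm_le (t : ℝ) (p : ℂ × ℂ) :
    ‖Dangle t p‖ ≤ (|1 - t| + |t|) * ‖p.2‖ := by
  unfold Dangle
  split_ifs with h
  · simp
    positivity
  · have ha : (0:ℝ) < ‖p.1‖ := by
      simpa [norm_pos_iff] using h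
    have hA : ‖(1 - (t:ℂ)) * p.2‖ = |1 - t| * ‖p.2‖ := by
      rw [norm_mul]
      congr 1
      rw [show (1 - (t:ℂ)) = ((1 - t : ℝ) : ℂ) by push_cast; ring, Complex.norm_real, Real.norm_eq_abs]
    have hB : ‖(t : ℂ) * ((‖p.2‖ / ‖p.1‖ : ℝ) : ℂ) *
        (starRingEnd ℂ) p.1‖ = |t| * ‖p.2‖ := by
      rw [norm_mul, norm_mul, Complex.norm_real, Complex.norm_real, Complex.norm_conj, Real.norm_eq_abs, Real.norm_eq_abs,
        _root_.abs_of_nonneg (div_nonneg (norm_nonneg _) (norm_nonneg _)),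
        mul_assoc, div_mul_cancel₀ _ ha.ne']
    exact (norm_add_le _ _).trans (le_of_eq (by rw [hA, hB]; ring))

/-- On the set `{(a,d) : |a| = |d|}`, the homotopy `Hangle` is continuous,
satisfies `H₀ = id`, `H₁(a,d) = (a, ā)`, and fixes all points of the form `(a, ā)`. -/
theorem Hangle_properties :
    ContinuousOn (fun q : (ℂ × ℂ) × ℝ => Hangle q.2 q.1)
      ({p : ℂ × ℂ | ‖p.1‖ = ‖p.2‖} ×ˢ Set.Icc (0 : ℝ) 1) ∧
    (∀ p : ℂ × ℂ, ‖p.1‖ = ‖p.2‖ → Hangle 0 p = p) ∧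
    (∀ p : ℂ × ℂ, ‖p.1‖ = ‖p.2‖ →
      Hangle 1 p = (p.1, (starRingEnd ℂ) p.1)) ∧
    (∀ t ∈ Set.Icc (0 : ℝ) 1, ∀ a : ℂ, Hangle t (a, (starRingEnd ℂ) a) = (a, (starRingEnd ℂ) a)) := by
  refine ⟨?_, ?_, ?_, ?_⟩
  · have heq : (fun q : (ℂ × ℂ) × ℝ => Hangle q.2 q.1)
        = fun q => (q.1.1, Dangle q.2 q.1) := by
      funext q; exact Hangle_eq _ _
    rw [heq]
    apply ContinuousOn.prodMk
    · exact (continuous_fst.comp continuous_fst).continuousOn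
    · rintro ⟨⟨a, d⟩, t⟩ ⟨hp, ht⟩
      by_cases ha : a = 0
      · have hd : d = 0 := by
          have : ‖d‖ = 0 := by simpa [ha] using hp.symm
          simpa using this
        subst ha; subst hd
        have hD : Dangle t ((0:ℂ), (0:ℂ)) = 0 := by simp [Dangle]
        rw [ContinuousWithinAt, hD]
        rw [tendsto_zero_iff_norm_tendsto_zero]
        apply squeeze_zero' (Filter.Eventually.of_forall fun q => norm_nonneg _)
          (Filter.Eventually.of_forall fun q => ?_)
        · have : Filter.Tendsto (fun q : (ℂ × ℂ) × ℝ => (|1 - q.2| + |q.2|) * ‖q.1.2‖)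
              (nhds (((0:ℂ), (0:ℂ)), t)) (nhds ((|1 - t| + |t|) * ‖(0:ℂ)‖)) := by
            exact (((continuous_const.sub continuous_snd).abs.add continuous_snd.abs).mul
              (continuous_norm.comp (continuous_snd.comp continuous_fst))).tendsto _
          simpa using this.mono_left nhdsWithin_le_nhds
        · simpa using Dangle_norm_le q.2 q.1
      · have hopen : IsOpen {q : (ℂ × ℂ) × ℝ | q.1.1 ≠ 0} :=
          isOpen_ne.preimage (continuous_fst.comp continuous_fst)
        have hmem : (((a, d), t) : (ℂ × ℂ) × ℝ) ∈ {q : (ℂ × ℂ) × ℝ | q.1.1 ≠ 0} := ha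
        apply ContinuousWithinAt.congr_of_eventuallyEq
          (f := fun q : (ℂ × ℂ) × ℝ =>
            (1 - (q.2:ℂ)) * q.1.2 +
              (q.2 : ℂ) * ((‖q.1.2‖ / ‖q.1.1‖ : ℝ) : ℂ) * (starRingEnd ℂ) q.1.1)
        · apply ContinuousAt.continuousWithinAt
          have hc2 : Continuous fun q : (ℂ × ℂ) × ℝ => ‖q.1.2‖ :=
            continuous_norm.comp (continuous_snd.comp continuous_fst)
          have hc1 : Continuous fun q : (ℂ × ℂ) × ℝ => ‖q.1.1‖ :=
            continuous_norm.comp (continuous_fst.comp continuous_fst)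
          have hdiv : ContinuousAt (fun q : (ℂ × ℂ) × ℝ =>
              (‖q.1.2‖ / ‖q.1.1‖ : ℝ)) ((a, d), t) :=
            hc2.continuousAt.div hc1.continuousAt
              (by simpa [norm_ne_zero_iff] using ha)
          have hconj : Continuous fun q : (ℂ × ℂ) × ℝ => (starRingEnd ℂ) q.1.1 :=
            Complex.continuous_conj.comp (continuous_fst.comp continuous_fst)
          exact (((continuous_const.sub (Complex.continuous_ofReal.comp
            continuous_snd)).mul (continuous_snd.comp continuous_fst)).continuousAt.add
            ((((Complex.continuous_ofReal.comp continuous_snd).continuousAt.mul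
              (Complex.continuous_ofReal.continuousAt.comp hdiv)).mul
              hconj.continuousAt)))
        · filter_upwards [nhdsWithin_le_nhds (hopen.mem_nhds hmem)] with q hq
          simp only [Dangle, if_neg hq]
        · simp [Dangle, if_neg ha]
  · rintro ⟨a, d⟩ hp
    by_cases ha : a = 0
    · have hd : d = 0 := by
        have : ‖d‖ = 0 := by simpa [ha] using hp.symm
        simpa using this
      simp [Hangle, ha, hd]
    · simp [Hangle, ha]
  · rintro ⟨a, d⟩ hp
    by_cases ha : a = 0
    · have hd : d = 0 := by
        have : ‖d‖ = 0 := by simpa [ha] using hp.symm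
        simpa using this
      simp [Hangle, ha, hd]
    · have : ‖d‖ / ‖a‖ = 1 := by
        rw [← hp, div_self (by simpa [norm_ne_zero_iff] using ha)]
      simp [Hangle, ha, this]
  · rintro t ht a
    by_cases ha : a = 0
    · simp [Hangle, ha]
    · have : ‖(starRingEnd ℂ) a‖ / ‖a‖ = 1 := by
        rw [Complex.norm_conj, div_self (by simpa [norm_ne_zero_iff] using ha)]
      simp only [Hangle, ha, if_neg ha, this]
      norm_num
      ring
end
end

section
/- The map ϖ: Sym²(S¹ × S¹) → S¹ × S¹ sending the multiset {(λ₁, μ₁), (λ₂, μ₂)} to (λ₁λ₂, μ₁μ₂) is a well-defined continuous surjection, every fiber is homeomorphic to SSym²(S¹ × S¹) = ϖ⁻¹(1,1), and ϖ is a locally trivial fiber bundle. -/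
open Complex Set Topology


/-- The map `ϖ : Sym²(S¹ × S¹) → S¹ × S¹` sending `{(λ₁,μ₁), (λ₂,μ₂)}` to
`(λ₁λ₂, μ₁μ₂)`. -/
noncomputable def symProd : Sym2 (Circle × Circle) → Circle × Circle :=
  Sym2.lift ⟨fun x y => (x.1 * y.1, x.2 * y.2), by
    intro x y
    exact Prod.ext (mul_comm _ _) (mul_comm _ _)⟩

abbrev C2 := Circle × Circle

lemma symProd_mk (p q : C2) : symProd (Sym2.mk p q) = p * q := rfl

lemma continuous_symProd : Continuous symProd := by
  rw [isQuotientMap_quot_mk.continuous_iff]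
  exact continuous_fst.mul continuous_snd

noncomputable def csqrt (z : Circle) : Circle := Circle.exp (Complex.arg z / 2)

lemma csqrt_sq (z : Circle) : csqrt z * csqrt z = z := by
  rw [csqrt, ← Circle.exp_add, add_halves, Circle.exp_arg]

lemma continuousOn_csqrt : ContinuousOn csqrt {z : Circle | (z : ℂ) ∈ slitPlane} := by
  intro z hz
  exact ((Circle.exp.continuous.continuousAt.comp
    (((continuousAt_arg hz).comp continuous_subtype_val.continuousAt).div_const 2))).continuousWithinAt

lemma isOpenMap_sym2mk {α : Type*} [TopologicalSpace α] :
    IsOpenMap (Quot.mk _ : α × α → Sym2 α) := by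
  intro s hs
  rw [← isQuotientMap_quot_mk.isOpen_preimage]
  have h : Quot.mk (Sym2.Rel α) ⁻¹' (Quot.mk (Sym2.Rel α) '' s) = s ∪ Prod.swap ⁻¹' s := by
    ext p
    simp only [mem_preimage, mem_image, mem_union]
    constructor
    · rintro ⟨q, hq, hqp⟩
      rcases Sym2.mk_eq_mk_iff.mp hqp with rfl | rfl
      · exact Or.inl hq
      · exact Or.inr (by simpa using hq)
    · rintro (hp | hp)
      · exact ⟨p, hp, rfl⟩
      · exact ⟨p.swap, hp, Sym2.mk_eq_mk_iff.mpr (Or.inr rfl)⟩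
  rw [h]
  exact hs.union (hs.preimage continuous_swap)

lemma isOpenQuotientMap_sym2mk {α : Type*} [TopologicalSpace α] :
    IsOpenQuotientMap (Quot.mk _ : α × α → Sym2 α) :=
  ⟨Quot.mk_surjective, continuous_quot_mk, isOpenMap_sym2mk⟩

lemma continuous_sym2map {α β : Type*} [TopologicalSpace α] [TopologicalSpace β]
    {f : α → β} (hf : Continuous f) : Continuous (Sym2.map f) := by
  rw [isQuotientMap_quot_mk.continuous_iff]
  have : (Sym2.map f ∘ Quot.mk _ : α × α → Sym2 β) = fun p => Sym2.mk (f p.1) (f p.2) :=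
    funext fun p => rfl
  rw [this]
  exact continuous_quot_mk.comp (hf.prodMap hf)

/-- Multiplication by `c` on `Sym2 C2` as a homeomorphism. -/
noncomputable def tmul (c : C2) : Homeomorph (Sym2 C2) (Sym2 C2) where
  toFun := Sym2.map (c * ·)
  invFun := Sym2.map (c⁻¹ * ·)
  left_inv x := by
    rw [Sym2.map_map]
    have : ((c⁻¹ * ·) ∘ (c * ·) : C2 → C2) = id := funext fun z => by simp
    simp [this]
  right_inv x := by
    rw [Sym2.map_map]
    have : ((c * ·) ∘ (c⁻¹ * ·) : C2 → C2) = id := funext fun z => by simp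
    simp [this]
  continuous_toFun := continuous_sym2map (continuous_const.mul continuous_id)
  continuous_invFun := continuous_sym2map (continuous_const.mul continuous_id)

lemma symProd_tmul (c : C2) (x : Sym2 C2) :
    symProd (Sym2.map (c * ·) x) = c * c * symProd x := by
  induction x using Sym2.ind with
  | _ p q => rw [Sym2.map_pair_eq]
             show (c * p) * (c * q) = c * c * (p * q)
             exact mul_mul_mul_comm c p c q

lemma continuous_mu : Continuous (fun z : C2 × Sym2 C2 => Sym2.map (z.1 * ·) z.2) := by
  rw [← (IsOpenQuotientMap.id.prodMap isOpenQuotientMap_sym2mk).continuous_comp_iff]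
  have h : ((fun z : C2 × Sym2 C2 => Sym2.map (z.1 * ·) z.2) ∘ Prod.map id (Quot.mk _))
      = fun w : C2 × (C2 × C2) => Sym2.mk (w.1 * w.2.1) (w.1 * w.2.2) := by
    funext w
    obtain ⟨d, a, b⟩ := w
    exact Sym2.map_pair_eq _ a b
  rw [h]
  exact continuous_quot_mk.comp
    ((continuous_fst.mul (continuous_snd.fst)).prodMk (continuous_fst.mul continuous_snd.snd))

/-- `symProd` is a well-defined continuous surjection, all of its fibers
are homeomorphic to the fiber `SSym²(S¹×S¹)` over `(1,1)`, and it is a locally trivial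
fiber bundle. -/
theorem symProd_fiber_bundle :
    Continuous symProd ∧
    Function.Surjective symProd ∧
    (∀ b : Circle × Circle,
      Nonempty ((symProd ⁻¹' {b}) ≃ₜ (symProd ⁻¹' {((1 : Circle), (1 : Circle))}))) ∧
    (∀ b : Circle × Circle, ∃ U : Set (Circle × Circle), IsOpen U ∧ b ∈ U ∧
      ∃ e : (symProd ⁻¹' U) ≃ₜ U × (symProd ⁻¹' {((1 : Circle), (1 : Circle))}),
        ∀ x : symProd ⁻¹' U, ((e x).1 : Circle × Circle) = symProd x) := by
  have hone : ((1 : Circle), (1 : Circle)) = (1 : C2) := rfl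
  refine ⟨continuous_symProd, ?_, ?_, ?_⟩
  · -- surjectivity
    intro b
    exact ⟨Sym2.mk (csqrt b.1, csqrt b.2) (csqrt b.1, csqrt b.2),
      by rw [symProd_mk]; exact Prod.ext (csqrt_sq _) (csqrt_sq _)⟩
  · -- fibers
    intro b
    set c : C2 := (csqrt b.1, csqrt b.2) with hcdef
    have hc : c * c = b := Prod.ext (csqrt_sq _) (csqrt_sq _)
    have himg : (tmul c) '' (symProd ⁻¹' {((1 : Circle), (1 : Circle))}) = symProd ⁻¹' {b} := by
      ext x
      simp only [mem_image, mem_preimage, mem_singleton_iff]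
      constructor
      · rintro ⟨y, hy, rfl⟩
        show symProd (Sym2.map (c * ·) y) = b
        rw [symProd_tmul, hy, hone, mul_one, hc]
      · intro hx
        refine ⟨(tmul c).symm x, ?_, (tmul c).apply_symm_apply x⟩
        show symProd (Sym2.map (c⁻¹ * ·) x) = ((1 : Circle), (1 : Circle))
        rw [symProd_tmul, hx, hone, ← mul_inv, hc, inv_mul_cancel]
    exact ⟨(((tmul c).image _).trans (Homeomorph.setCongr himg)).symm⟩
  · -- local triviality
    intro b
    set c : C2 := (csqrt b.1, csqrt b.2) with hcdef
    have hc : c * c = b := Prod.ext (csqrt_sq _) (csqrt_sq _)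
    set U : Set C2 :=
      {u | ((u.1 / b.1 : Circle) : ℂ) ∈ slitPlane ∧ ((u.2 / b.2 : Circle) : ℂ) ∈ slitPlane}
      with hUdef
    have hUopen : IsOpen U := by
      have hq1 : Continuous fun u : C2 => u.1 / b.1 := continuous_fst.div' continuous_const
      have hq2 : Continuous fun u : C2 => u.2 / b.2 := continuous_snd.div' continuous_const
      have h1 : Continuous fun u : C2 => ((u.1 / b.1 : Circle) : ℂ) :=
        continuous_subtype_val.comp hq1
      have h2 : Continuous fun u : C2 => ((u.2 / b.2 : Circle) : ℂ) :=
        continuous_subtype_val.comp hq2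
      exact (isOpen_slitPlane.preimage h1).inter (isOpen_slitPlane.preimage h2)
    have hbU : b ∈ U := by
      constructor <;> · show _ ∈ slitPlane
                        rw [div_self']
                        exact Complex.one_mem_slitPlane
    set r : C2 → C2 := fun u => (c.1 * csqrt (u.1 / b.1), c.2 * csqrt (u.2 / b.2)) with hrdef
    have hrc : Continuous (U.restrict r) := by
      refine Continuous.prodMk ?_ ?_
      · exact continuous_const.mul (continuousOn_csqrt.comp_continuous
          ((continuous_subtype_val.fst.div' continuous_const)) (fun u => u.2.1))
      · exact continuous_const.mul (continuousOn_csqrt.comp_continuous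
          ((continuous_subtype_val.snd.div' continuous_const)) (fun u => u.2.2))
    have hrsq : ∀ u ∈ U, r u * r u = u := by
      intro u _
      refine Prod.ext ?_ ?_
      · show c.1 * csqrt (u.1 / b.1) * (c.1 * csqrt (u.1 / b.1)) = u.1
        rw [mul_mul_mul_comm, csqrt_sq, csqrt_sq, mul_div_cancel]
      · show c.2 * csqrt (u.2 / b.2) * (c.2 * csqrt (u.2 / b.2)) = u.2
        rw [mul_mul_mul_comm, csqrt_sq, csqrt_sq, mul_div_cancel]
    refine ⟨U, hUopen, hbU, ?_⟩
    have hmem1 : ∀ x : symProd ⁻¹' U,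
        Sym2.map ((r (symProd (x : Sym2 C2)))⁻¹ * ·) (x : Sym2 C2) ∈
          symProd ⁻¹' {((1 : Circle), (1 : Circle))} := by
      intro x
      simp only [mem_preimage, mem_singleton_iff]
      rw [symProd_tmul, ← mul_inv, hrsq _ x.2, inv_mul_cancel]
      exact hone.symm
    have hmem2 : ∀ p : U × (symProd ⁻¹' {((1 : Circle), (1 : Circle))}),
        Sym2.map ((r (p.1 : C2)) * ·) (p.2 : Sym2 C2) ∈ symProd ⁻¹' U := by
      intro p
      simp only [mem_preimage]
      rw [symProd_tmul, show symProd (p.2 : Sym2 C2) = (1 : C2) from p.2.2, mul_one,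
        hrsq _ p.1.2]
      exact p.1.2
    have hsym2 : ∀ p : U × (symProd ⁻¹' {((1 : Circle), (1 : Circle))}),
        symProd (Sym2.map ((r (p.1 : C2)) * ·) (p.2 : Sym2 C2)) = (p.1 : C2) := by
      intro p
      rw [symProd_tmul, show symProd (p.2 : Sym2 C2) = (1 : C2) from p.2.2, mul_one,
        hrsq _ p.1.2]
    refine ⟨{ toFun := fun x => (⟨symProd (x : Sym2 C2), x.2⟩,
                ⟨Sym2.map ((r (symProd (x : Sym2 C2)))⁻¹ * ·) (x : Sym2 C2), hmem1 x⟩),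
              invFun := fun p => ⟨Sym2.map ((r (p.1 : C2)) * ·) (p.2 : Sym2 C2), hmem2 p⟩,
              left_inv := ?_, right_inv := ?_,
              continuous_toFun := ?_, continuous_invFun := ?_ }, fun x => rfl⟩
    · intro x
      apply Subtype.ext
      show Sym2.map _ (Sym2.map _ _) = _
      rw [Sym2.map_map]
      have hcomp : ((r (symProd (x : Sym2 C2)) * ·) ∘ ((r (symProd (x : Sym2 C2)))⁻¹ * ·)
          : C2 → C2) = id := funext fun z => mul_inv_cancel_left _ z
      rw [hcomp, Sym2.map_id, id_eq]
    · intro p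
      have hs := hsym2 p
      refine Prod.ext (Subtype.ext ?_) (Subtype.ext ?_)
      · exact hs
      · show Sym2.map _ (Sym2.map _ _) = _
        rw [Sym2.map_map, hs]
        have hcomp : (((r (p.1 : C2))⁻¹ * ·) ∘ ((r (p.1 : C2)) * ·) : C2 → C2) = id :=
          funext fun z => inv_mul_cancel_left _ z
        rw [hcomp, Sym2.map_id, id_eq]
    · refine Continuous.prodMk ?_ ?_
      · exact ((continuous_symProd.comp continuous_subtype_val).subtype_mk _)
      · refine Continuous.subtype_mk ?_ _
        have hg : Continuous fun x : (symProd ⁻¹' U) => (r (symProd (x : Sym2 C2)))⁻¹ := by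
          exact (hrc.comp (((continuous_symProd.comp continuous_subtype_val)).subtype_mk
            (fun x => x.2))).inv
        exact continuous_mu.comp (hg.prodMk continuous_subtype_val)
    · refine Continuous.subtype_mk ?_ _
      have hg : Continuous fun p : U × (symProd ⁻¹' {((1 : Circle), (1 : Circle))}) =>
          r (p.1 : C2) := hrc.comp continuous_fst
      exact continuous_mu.comp (hg.prodMk (continuous_subtype_val.comp continuous_snd))
end

section
/- Let σ be a partition of r with at least one part of multiplicity structure containing an eigenvalue of multiplicity one, realized by matrices A = diag(λ₁, ..., λᵣ) ∈ U(r) with λ₁ a simple eigenvalue. Then the space F_σ of matrices B ∈ U(r) modulo the conjugation action of Stab(A), subject to (A,B) being irreducible, is homeomorphic to SF_σ × S¹, where SF_σ is the corresponding space with B ∈ SU(r), via B ↦ (B', det B) where B' is obtained from B by multiplying its first column by det(B)⁻¹. -/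
/-- A pair of matrices `(A, B)` is irreducible if the only subspaces invariant
under both `A` and `B` are `0` and the whole space. -/
def IsIrreduciblePair {r : ℕ} (A B : Matrix (Fin r) (Fin r) ℂ) : Prop :=
  ∀ W : Submodule ℂ (Fin r → ℂ),
    (∀ v ∈ W, A.mulVec v ∈ W) → (∀ v ∈ W, B.mulVec v ∈ W) → W = ⊥ ∨ W = ⊤

/-- Unitary matrices `B` such that `(diag(λ), B)` is irreducible. -/
def FU (r : ℕ) (lam : Fin (r + 1) → ℂ) :=
  {B : Matrix (Fin (r + 1)) (Fin (r + 1)) ℂ //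
    B ∈ Matrix.unitaryGroup (Fin (r + 1)) ℂ ∧ IsIrreduciblePair (Matrix.diagonal lam) B}

/-- Conjugation by the centralizer of `diag(λ)` in `U(r)`. -/
def RelU (r : ℕ) (lam : Fin (r + 1) → ℂ) (B B' : FU r lam) : Prop :=
  ∃ T ∈ Matrix.unitaryGroup (Fin (r + 1)) ℂ,
    T * Matrix.diagonal lam = Matrix.diagonal lam * T ∧ B'.1 = T * B.1 * star T

/-- Special unitary matrices `B` such that `(diag(λ), B)` is irreducible. -/
def FSU (r : ℕ) (lam : Fin (r + 1) → ℂ) :=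
  {B : Matrix (Fin (r + 1)) (Fin (r + 1)) ℂ //
    B ∈ Matrix.specialUnitaryGroup (Fin (r + 1)) ℂ ∧ IsIrreduciblePair (Matrix.diagonal lam) B}

/-- Conjugation by the centralizer of `diag(λ)` in `SU(r)`. -/
def RelSU (r : ℕ) (lam : Fin (r + 1) → ℂ) (B B' : FSU r lam) : Prop :=
  ∃ T ∈ Matrix.specialUnitaryGroup (Fin (r + 1)) ℂ,
    T * Matrix.diagonal lam = Matrix.diagonal lam * T ∧ B'.1 = T * B.1 * star T


instance (r : ℕ) (lam : Fin (r + 1) → ℂ) : TopologicalSpace (FU r lam) :=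
  inferInstanceAs (TopologicalSpace {B : Matrix (Fin (r + 1)) (Fin (r + 1)) ℂ //
    B ∈ Matrix.unitaryGroup (Fin (r + 1)) ℂ ∧ IsIrreduciblePair (Matrix.diagonal lam) B})

instance (r : ℕ) (lam : Fin (r + 1) → ℂ) : TopologicalSpace (FSU r lam) :=
  inferInstanceAs (TopologicalSpace {B : Matrix (Fin (r + 1)) (Fin (r + 1)) ℂ //
    B ∈ Matrix.specialUnitaryGroup (Fin (r + 1)) ℂ ∧ IsIrreduciblePair (Matrix.diagonal lam) B})


open Matrix

namespace FiberSplit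

variable {r : ℕ} (lam : Fin (r + 1) → ℂ)

/-- The diagonal matrix rescaling the `0`-th coordinate by `c`. -/
def D (c : ℂ) : Matrix (Fin (r + 1)) (Fin (r + 1)) ℂ :=
  Matrix.diagonal (fun j => if j = 0 then c else 1)

lemma D_mul_D (c c' : ℂ) : (D c : Matrix (Fin (r+1)) (Fin (r+1)) ℂ) * D c' = D (c * c') := by
  rw [D, D, D, diagonal_mul_diagonal]
  have : (fun i : Fin (r+1) => (if i = 0 then c else 1) * (if i = 0 then c' else 1))
      = fun j : Fin (r+1) => if j = 0 then c * c' else 1 := by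
    funext j; by_cases h : j = 0 <;> simp [h]
  rw [this]

lemma D_one : (D 1 : Matrix (Fin (r+1)) (Fin (r+1)) ℂ) = 1 := by
  rw [D]
  have : (fun j : Fin (r+1) => if j = 0 then (1:ℂ) else 1) = fun _ => 1 := by
    funext j; by_cases h : j = 0 <;> simp [h]
  rw [this, diagonal_one]

lemma D_det (c : ℂ) : (D c : Matrix (Fin (r+1)) (Fin (r+1)) ℂ).det = c := by
  rw [D, det_diagonal]
  rw [Finset.prod_ite_eq' Finset.univ (0 : Fin (r+1)) (fun _ => c)]
  simp

lemma D_unitary {c : ℂ} (hc : ‖c‖ = 1) :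
    (D c : Matrix (Fin (r+1)) (Fin (r+1)) ℂ) ∈ Matrix.unitaryGroup (Fin (r+1)) ℂ := by
  rw [Matrix.mem_unitaryGroup_iff]
  rw [Matrix.star_eq_conjTranspose, D, diagonal_conjTranspose, diagonal_mul_diagonal]
  have : (fun i : Fin (r+1) =>
      (if i = 0 then c else 1) * star (fun j : Fin (r+1) => if j = 0 then c else 1) i)
      = fun _ => (1:ℂ) := by
    funext j
    by_cases h : j = 0 <;>
      simp [h, Pi.star_apply, Complex.star_def, Complex.mul_conj]
    rw [Complex.normSq_eq_norm_sq, hc]; norm_num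
  rw [this, diagonal_one]


section Centralizer

variable {lam}

lemma centralizer_row_col {T : Matrix (Fin (r+1)) (Fin (r+1)) ℂ}
    (hsimple : ∀ i, i ≠ 0 → lam i ≠ lam 0)
    (hT : T * Matrix.diagonal lam = Matrix.diagonal lam * T) :
    (∀ j, j ≠ 0 → T 0 j = 0) ∧ (∀ i, i ≠ 0 → T i 0 = 0) := by
  have key : ∀ i j, T i j * lam j = lam i * T i j := by
    intro i j
    have := congrFun (congrFun hT i) j
    rwa [Matrix.mul_diagonal, Matrix.diagonal_mul] at this
  constructor
  · intro j hj
    have h := key 0 j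
    have : T 0 j * (lam j - lam 0) = 0 := by rw [mul_sub]; rw [h]; ring
    rcases mul_eq_zero.1 this with h' | h'
    · exact h'
    · exact absurd (sub_eq_zero.1 h') (hsimple j hj)
  · intro i hi
    have h := key i 0
    have : T i 0 * (lam 0 - lam i) = 0 := by rw [mul_sub]; rw [h]; ring
    rcases mul_eq_zero.1 this with h' | h'
    · exact h'
    · exact absurd (sub_eq_zero.1 h').symm (hsimple i hi)

lemma centralizer_comm_D {T : Matrix (Fin (r+1)) (Fin (r+1)) ℂ}
    (hsimple : ∀ i, i ≠ 0 → lam i ≠ lam 0)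
    (hT : T * Matrix.diagonal lam = Matrix.diagonal lam * T) (c : ℂ) :
    T * D c = D c * T := by
  obtain ⟨h1, h2⟩ := centralizer_row_col hsimple hT
  ext i j
  rw [D, Matrix.mul_diagonal, Matrix.diagonal_mul]
  by_cases hi : i = 0 <;> by_cases hj : j = 0 <;> simp [hi, hj]
  · ring
  · subst hi; rw [h1 j hj]; ring
  · subst hj; rw [h2 i hi]; ring

end Centralizer

section Irreducible

variable {lam}

lemma mulVec_D_mem {W : Submodule ℂ (Fin (r+1) → ℂ)}
    (hsimple : ∀ i, i ≠ 0 → lam i ≠ lam 0)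
    (hWA : ∀ v ∈ W, (Matrix.diagonal lam).mulVec v ∈ W)
    {v : Fin (r+1) → ℂ} (hv : v ∈ W) (c : ℂ) :
    (D c).mulVec v ∈ W := by
  classical
  -- W is invariant under polynomials in `diagonal lam`
  have key : ∀ s : Finset (Fin (r+1)), ∀ w ∈ W,
      (Matrix.diagonal (fun j => ∏ i ∈ s, (lam j - lam i))).mulVec w ∈ W := by
    intro s
    induction s using Finset.induction_on with
    | empty => intro w hw; simpa [Matrix.diagonal_one, Matrix.one_mulVec] using hw
    | insert _ _ ha ih =>
      rename_i a s
      intro w hw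
      have hmem := ih w hw
      set u := (Matrix.diagonal (fun j => ∏ i ∈ s, (lam j - lam i))).mulVec w with hu
      have : (Matrix.diagonal (fun j => ∏ i ∈ insert a s, (lam j - lam i))).mulVec w
          = (Matrix.diagonal lam).mulVec u - lam a • u := by
        funext j
        simp only [Matrix.mulVec_diagonal, Pi.sub_apply, Pi.smul_apply, smul_eq_mul, hu,
          Finset.prod_insert ha]
        ring
      rw [this]
      exact W.sub_mem (hWA u hmem) (W.smul_mem _ hmem)
  -- the coordinate projection onto the 0-th coordinate preserves W
  set d : Fin (r+1) → ℂ := fun j => ∏ i ∈ Finset.univ.erase 0, (lam j - lam i) with hd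
  have hd0 : d 0 ≠ 0 := by
    rw [hd]
    rw [Finset.prod_ne_zero_iff]
    intro i hi
    exact sub_ne_zero.2 (Ne.symm (hsimple i (Finset.mem_erase.1 hi).1))
  have hdj : ∀ j, j ≠ 0 → d j = 0 := by
    intro j hj
    exact Finset.prod_eq_zero (Finset.mem_erase.2 ⟨hj, Finset.mem_univ j⟩) (sub_self _)
  have hproj : (fun j => if j = 0 then v 0 else 0) ∈ W := by
    have hk := key (Finset.univ.erase 0) v hv
    have heq : (fun j => if j = 0 then v 0 else 0)
        = (d 0)⁻¹ • ((Matrix.diagonal d).mulVec v) := by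
      funext j
      simp only [Pi.smul_apply, Matrix.mulVec_diagonal, smul_eq_mul]
      by_cases hj : j = 0
      · subst hj; simp [inv_mul_cancel_left₀ hd0]
      · simp [hj, hdj j hj]
    rw [heq]
    exact W.smul_mem _ hk
  have heq2 : (D c).mulVec v = v + (c - 1) • (fun j => if j = 0 then v 0 else 0) := by
    funext j
    simp only [D, Matrix.mulVec_diagonal, Pi.add_apply, Pi.smul_apply, smul_eq_mul]
    by_cases hj : j = 0 <;> simp [hj] <;> ring
  rw [heq2]
  exact W.add_mem hv (W.smul_mem _ hproj)

lemma isIrreduciblePair_mul_D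
    (hsimple : ∀ i, i ≠ 0 → lam i ≠ lam 0)
    {B : Matrix (Fin (r+1)) (Fin (r+1)) ℂ} {c : ℂ} (hc : c ≠ 0)
    (hB : IsIrreduciblePair (Matrix.diagonal lam) B) :
    IsIrreduciblePair (Matrix.diagonal lam) (B * D c) := by
  intro W hWA hWB
  apply hB W hWA
  intro v hv
  have h1 : (D c⁻¹).mulVec v ∈ W := mulVec_D_mem hsimple hWA hv c⁻¹
  have h2 := hWB _ h1
  rwa [Matrix.mulVec_mulVec, Matrix.mul_assoc, D_mul_D, mul_inv_cancel₀ hc, D_one,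
    Matrix.mul_one] at h2

lemma isIrreduciblePair_conj
    {T B : Matrix (Fin (r+1)) (Fin (r+1)) ℂ}
    (hTu : T ∈ Matrix.unitaryGroup (Fin (r+1)) ℂ)
    (hTA : T * Matrix.diagonal lam = Matrix.diagonal lam * T)
    (hB : IsIrreduciblePair (Matrix.diagonal lam) B) :
    IsIrreduciblePair (Matrix.diagonal lam) (T * B * star T) := by
  have hTsT : T * star T = 1 := Matrix.mem_unitaryGroup_iff.1 hTu
  have hsTT : star T * T = 1 := Matrix.mem_unitaryGroup_iff'.1 hTu
  have hAsT : Matrix.diagonal lam * star T = star T * Matrix.diagonal lam := by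
    have h2 := congrArg (fun M => star T * M * star T) hTA
    simp only [Matrix.mul_assoc] at h2
    rw [hTsT] at h2
    simp only [← Matrix.mul_assoc] at h2
    rw [hsTT, Matrix.one_mul, Matrix.mul_one] at h2
    exact h2
  intro W hWA hWB
  set f := Matrix.mulVecLin (star T) with hf
  have hfl : ∀ w, T.mulVec ((star T).mulVec w) = w := by
    intro w; rw [Matrix.mulVec_mulVec, hTsT, Matrix.one_mulVec]
  have hfl' : ∀ w, (star T).mulVec (T.mulVec w) = w := by
    intro w; rw [Matrix.mulVec_mulVec, hsTT, Matrix.one_mulVec]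
  have hcase := hB (W.map f) ?_ ?_
  · rcases hcase with h | h
    · left
      rw [eq_bot_iff]
      intro v hv
      have : f v ∈ W.map f := Submodule.mem_map_of_mem hv
      rw [h] at this
      have hv0 : f v = 0 := this
      have : v = T.mulVec (f v) := (hfl v).symm
      rw [hv0] at this
      simp only [Matrix.mulVec_zero] at this
      simpa [this] using W.zero_mem
    · right
      rw [eq_top_iff]
      intro v _
      have : f v ∈ W.map f := by rw [h]; trivial
      obtain ⟨w, hw, hwv⟩ := this
      have : w = v := by
        have h3 := congrArg T.mulVec hwv
        simp only [hf, Matrix.mulVecLin_apply] at h3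
        rwa [hfl, hfl] at h3
      rwa [this] at hw
  · rintro v ⟨w, hw, rfl⟩
    refine ⟨(Matrix.diagonal lam).mulVec w, hWA w hw, ?_⟩
    simp only [hf, Matrix.mulVecLin_apply, Matrix.mulVec_mulVec]
    rw [hAsT]
  · rintro v ⟨w, hw, rfl⟩
    refine ⟨(T * B * star T).mulVec w, hWB w hw, ?_⟩
    simp only [hf, Matrix.mulVecLin_apply, Matrix.mulVec_mulVec]
    have h4 : star T * (T * B * star T) = B * star T := by
      calc star T * (T * B * star T) = (star T * T) * B * star T := by
            simp only [Matrix.mul_assoc]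
        _ = B * star T := by rw [hsTT, Matrix.one_mul]
    rw [h4]

end Irreducible


section Det

variable {lam}

lemma det_abs_one {B : Matrix (Fin (r+1)) (Fin (r+1)) ℂ}
    (hB : B ∈ Matrix.unitaryGroup (Fin (r+1)) ℂ) : ‖B.det‖ = 1 := by
  have h := (Matrix.det_of_mem_unitary hB).2
  have h2 : B.det * (starRingEnd ℂ) B.det = 1 := h
  rw [Complex.mul_conj] at h2
  have h3 : Complex.normSq B.det = 1 := by exact_mod_cast h2
  rw [Complex.norm_def, h3, Real.sqrt_one]

lemma det_ne_zero_of_unitary {B : Matrix (Fin (r+1)) (Fin (r+1)) ℂ}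
    (hB : B ∈ Matrix.unitaryGroup (Fin (r+1)) ℂ) : B.det ≠ 0 := by
  intro h
  have := det_abs_one hB
  rw [h] at this
  simp at this

lemma det_conj_eq {T B : Matrix (Fin (r+1)) (Fin (r+1)) ℂ}
    (hT : T ∈ Matrix.unitaryGroup (Fin (r+1)) ℂ) :
    (T * B * star T).det = B.det := by
  have h : T.det * star T.det = 1 := (Matrix.det_of_mem_unitary hT).2
  rw [Matrix.det_mul, Matrix.det_mul, Matrix.star_eq_conjTranspose, Matrix.det_conjTranspose]
  calc T.det * B.det * star T.det = B.det * (T.det * star T.det) := by ring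
    _ = B.det := by rw [h, mul_one]

lemma exists_special {T : Matrix (Fin (r+1)) (Fin (r+1)) ℂ}
    (hTu : T ∈ Matrix.unitaryGroup (Fin (r+1)) ℂ) :
    ∃ S : Matrix (Fin (r+1)) (Fin (r+1)) ℂ,
      S ∈ Matrix.specialUnitaryGroup (Fin (r+1)) ℂ ∧
      (∀ M, S * M * star S = T * M * star T) ∧
      (∀ M, T * M = M * T → S * M = M * S) := by
  have hdet : T.det * star T.det = 1 := (Matrix.det_of_mem_unitary hTu).2
  have hdetns : Complex.normSq T.det = 1 := by
    have h2 : T.det * (starRingEnd ℂ) T.det = 1 := hdet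
    rw [Complex.mul_conj] at h2
    exact_mod_cast h2
  have hdet0 : T.det ≠ 0 := det_ne_zero_of_unitary hTu
  obtain ⟨mu, hmu⟩ := IsAlgClosed.exists_pow_nat_eq (T.det)⁻¹ (Nat.succ_pos r)
  have hmuns : Complex.normSq mu = 1 := by
    have h1 : Complex.normSq mu ^ (r+1) = 1 := by
      rw [← map_pow, hmu, map_inv₀, hdetns, inv_one]
    have := pow_left_inj₀ (Complex.normSq_nonneg mu) zero_le_one (Nat.succ_ne_zero r)
    rw [one_pow] at this
    exact this.1 h1
  have hmu1 : mu * star mu = 1 := by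
    have : mu * (starRingEnd ℂ) mu = ((Complex.normSq mu : ℝ) : ℂ) := Complex.mul_conj mu
    rw [hmuns] at this
    simpa using this
  refine ⟨mu • T, ?_, ?_, ?_⟩
  · rw [Matrix.mem_specialUnitaryGroup_iff]
    constructor
    · rw [Matrix.mem_unitaryGroup_iff]
      rw [star_smul, smul_mul_assoc, mul_smul_comm, smul_smul]
      rw [Matrix.mem_unitaryGroup_iff.1 hTu, hmu1, one_smul]
    · rw [Matrix.det_smul, Fintype.card_fin, hmu, inv_mul_cancel₀ hdet0]
  · intro M
    rw [star_smul, smul_mul_assoc, smul_mul_assoc, mul_smul_comm, smul_smul, hmu1, one_smul]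
  · intro M hM
    rw [smul_mul_assoc, mul_smul_comm, hM]

end Det


section Main

variable {lam}

lemma star_centralizer {T : Matrix (Fin (r+1)) (Fin (r+1)) ℂ}
    (hTu : T ∈ Matrix.unitaryGroup (Fin (r+1)) ℂ)
    (hTA : T * Matrix.diagonal lam = Matrix.diagonal lam * T) :
    star T * Matrix.diagonal lam = Matrix.diagonal lam * star T := by
  have hTsT : T * star T = 1 := Matrix.mem_unitaryGroup_iff.1 hTu
  have hsTT : star T * T = 1 := Matrix.mem_unitaryGroup_iff'.1 hTu
  have h2 := congrArg (fun M => star T * M * star T) hTA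
  simp only [Matrix.mul_assoc] at h2
  rw [hTsT] at h2
  simp only [← Matrix.mul_assoc] at h2
  rw [hsTT, Matrix.one_mul, Matrix.mul_one] at h2
  exact h2.symm

lemma conj_mul_D {T M : Matrix (Fin (r+1)) (Fin (r+1)) ℂ} {c : ℂ}
    (hTD : star T * D c = D c * star T) :
    (T * M * star T) * D c = T * (M * D c) * star T := by
  simp only [Matrix.mul_assoc]
  rw [hTD]

lemma star_comm_D (hsimple : ∀ i, i ≠ 0 → lam i ≠ lam 0) {T : Matrix (Fin (r+1)) (Fin (r+1)) ℂ}
    (hTu : T ∈ Matrix.unitaryGroup (Fin (r+1)) ℂ)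
    (hTA : T * Matrix.diagonal lam = Matrix.diagonal lam * T) (c : ℂ) :
    star T * D c = D c * star T :=
  centralizer_comm_D hsimple (star_centralizer hTu hTA) c

variable (hsimple : ∀ i, i ≠ 0 → lam i ≠ lam 0)

/-- Rescaling the first column by the inverse determinant. -/
noncomputable def phi : FU r lam → FSU r lam := fun B =>
  ⟨B.1 * D (B.1.det)⁻¹, by
    rw [Matrix.mem_specialUnitaryGroup_iff]
    refine ⟨Submonoid.mul_mem _ B.2.1 (D_unitary ?_), ?_⟩
    · rw [norm_inv, det_abs_one B.2.1, inv_one]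
    · rw [Matrix.det_mul, D_det, mul_inv_cancel₀ (det_ne_zero_of_unitary B.2.1)],
    isIrreduciblePair_mul_D hsimple (inv_ne_zero (det_ne_zero_of_unitary B.2.1)) B.2.2⟩

/-- The determinant, as an element of the circle. -/
noncomputable def delta : FU r lam → Circle := fun B =>
  ⟨B.1.det, by
    show B.1.det ∈ Metric.sphere (0:ℂ) 1
    rw [mem_sphere_zero_iff_norm, det_abs_one B.2.1]⟩

/-- Rescaling the first column by `z`. -/
noncomputable def psi : FSU r lam → Circle → FU r lam := fun C z =>
  ⟨C.1 * D (z : ℂ), by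
    refine ⟨Submonoid.mul_mem _ (Matrix.mem_specialUnitaryGroup_iff.1 C.2.1).1
      (D_unitary (Circle.norm_coe z)), ?_⟩
    exact isIrreduciblePair_mul_D hsimple (Circle.coe_ne_zero z) C.2.2⟩

lemma psi_phi (B : FU r lam) : psi hsimple (phi hsimple B) (delta B) = B := by
  apply Subtype.ext
  show (B.1 * D (B.1.det)⁻¹) * D (B.1.det) = B.1
  rw [Matrix.mul_assoc, D_mul_D, inv_mul_cancel₀ (det_ne_zero_of_unitary B.2.1), D_one,
    Matrix.mul_one]

lemma psi_det (C : FSU r lam) (z : Circle) : (psi hsimple C z).1.det = (z : ℂ) := by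
  show (C.1 * D (z:ℂ)).det = (z:ℂ)
  rw [Matrix.det_mul, (Matrix.mem_specialUnitaryGroup_iff.1 C.2.1).2, one_mul, D_det]

lemma phi_psi (C : FSU r lam) (z : Circle) : phi hsimple (psi hsimple C z) = C := by
  apply Subtype.ext
  show (psi hsimple C z).1 * D ((psi hsimple C z).1.det)⁻¹ = C.1
  rw [psi_det]
  show (C.1 * D (z:ℂ)) * D ((z:ℂ))⁻¹ = C.1
  rw [Matrix.mul_assoc, D_mul_D, mul_inv_cancel₀ (Circle.coe_ne_zero z), D_one, Matrix.mul_one]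

lemma delta_psi (C : FSU r lam) (z : Circle) : delta (psi hsimple C z) = z := by
  apply Subtype.ext
  show (psi hsimple C z).1.det = (z : ℂ)
  exact psi_det hsimple C z

lemma continuous_phi : Continuous (phi hsimple) := by
  apply Continuous.subtype_mk
  apply Continuous.matrix_mul continuous_subtype_val
  apply Continuous.matrix_diagonal
  apply continuous_pi
  intro j
  by_cases hj : j = 0
  · simp only [if_pos hj]
    exact (continuous_subtype_val.matrix_det).inv₀
      (fun B => det_ne_zero_of_unitary B.2.1)
  · simp only [if_neg hj]
    exact continuous_const

lemma continuous_delta : Continuous (delta (lam := lam)) := by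
  apply Continuous.subtype_mk
  exact continuous_subtype_val.matrix_det

lemma continuous_psi : Continuous (fun p : FSU r lam × Circle => psi hsimple p.1 p.2) := by
  apply Continuous.subtype_mk
  apply Continuous.matrix_mul (continuous_subtype_val.comp continuous_fst)
  apply Continuous.matrix_diagonal
  apply continuous_pi
  intro j
  by_cases hj : j = 0
  · simp only [if_pos hj]
    exact continuous_subtype_val.comp continuous_snd
  · simp only [if_neg hj]
    exact continuous_const


lemma relSU_equivalence : Equivalence (RelSU r lam) := by
  constructor
  · intro C
    refine ⟨1, ?_, by rw [Matrix.one_mul, Matrix.mul_one], by simp⟩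
    rw [Matrix.mem_specialUnitaryGroup_iff]
    exact ⟨Submonoid.one_mem _, Matrix.det_one⟩
  · rintro C C' ⟨T, hT, hTA, hC'⟩
    have hTu : T ∈ Matrix.unitaryGroup (Fin (r+1)) ℂ :=
      (Matrix.mem_specialUnitaryGroup_iff.1 hT).1
    refine ⟨star T, ?_, ?_, ?_⟩
    · rw [Matrix.mem_specialUnitaryGroup_iff]
      refine ⟨Unitary.star_mem hTu, ?_⟩
      rw [Matrix.star_eq_conjTranspose, Matrix.det_conjTranspose,
        (Matrix.mem_specialUnitaryGroup_iff.1 hT).2]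
      exact star_one ℂ
    · exact star_centralizer hTu hTA
    · rw [hC', star_star]
      have h1 : star T * T = 1 := Matrix.mem_unitaryGroup_iff'.1 hTu
      refine Eq.symm ?_
      calc star T * (T * C.1 * star T) * T
          = (star T * T) * C.1 * (star T * T) := by simp only [Matrix.mul_assoc]
        _ = C.1 := by rw [h1, Matrix.one_mul, Matrix.mul_one]
  · rintro C C' C'' ⟨T, hT, hTA, hC'⟩ ⟨T', hT', hT'A, hC''⟩
    refine ⟨T' * T, Submonoid.mul_mem _ hT' hT, ?_, ?_⟩
    · calc T' * T * Matrix.diagonal lam = T' * (Matrix.diagonal lam * T) := by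
            rw [Matrix.mul_assoc, hTA]
        _ = Matrix.diagonal lam * (T' * T) := by
            rw [← Matrix.mul_assoc, hT'A, Matrix.mul_assoc]
    · rw [hC'', hC', StarMul.star_mul]
      simp only [Matrix.mul_assoc]

lemma sound_f {B B' : FU r lam} (h : RelU r lam B B') :
    RelSU r lam (phi hsimple B) (phi hsimple B') ∧ delta B' = delta B := by
  obtain ⟨T, hTu, hTA, hB'⟩ := h
  have hdet : B'.1.det = B.1.det := by rw [hB', det_conj_eq hTu]
  obtain ⟨S, hS, hconj, hcomm⟩ := exists_special hTu
  have hSu : S ∈ Matrix.unitaryGroup (Fin (r+1)) ℂ :=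
    (Matrix.mem_specialUnitaryGroup_iff.1 hS).1
  have hSA : S * Matrix.diagonal lam = Matrix.diagonal lam * S := hcomm _ hTA
  refine ⟨⟨S, hS, hSA, ?_⟩, Subtype.ext hdet⟩
  show B'.1 * D (B'.1.det)⁻¹ = S * (B.1 * D (B.1.det)⁻¹) * star S
  rw [hdet, hB', conj_mul_D (star_comm_D hsimple hTu hTA _), hconj]

lemma sound_g (z : Circle) {C C' : FSU r lam} (h : RelSU r lam C C') :
    RelU r lam (psi hsimple C z) (psi hsimple C' z) := by
  obtain ⟨T, hT, hTA, hC'⟩ := h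
  have hTu : T ∈ Matrix.unitaryGroup (Fin (r+1)) ℂ :=
    (Matrix.mem_specialUnitaryGroup_iff.1 hT).1
  refine ⟨T, hTu, hTA, ?_⟩
  show C'.1 * D (z:ℂ) = T * (C.1 * D (z:ℂ)) * star T
  rw [hC', conj_mul_D (star_comm_D hsimple hTu hTA _)]

/-- Conjugation by an element of the centralizer in `SU`, as a self-map of `FSU`. -/
noncomputable def conjMap (T : {T : Matrix (Fin (r+1)) (Fin (r+1)) ℂ //
    T ∈ Matrix.specialUnitaryGroup (Fin (r+1)) ℂ ∧
      T * Matrix.diagonal lam = Matrix.diagonal lam * T}) :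
    FSU r lam → FSU r lam := fun C =>
  ⟨T.1 * C.1 * star T.1, by
    have hTu : T.1 ∈ Matrix.unitaryGroup (Fin (r+1)) ℂ :=
      (Matrix.mem_specialUnitaryGroup_iff.1 T.2.1).1
    rw [Matrix.mem_specialUnitaryGroup_iff]
    refine ⟨Submonoid.mul_mem _ (Submonoid.mul_mem _ hTu
      (Matrix.mem_specialUnitaryGroup_iff.1 C.2.1).1) (Unitary.star_mem hTu), ?_⟩
    rw [det_conj_eq hTu, (Matrix.mem_specialUnitaryGroup_iff.1 C.2.1).2],
    isIrreduciblePair_conj (Matrix.mem_specialUnitaryGroup_iff.1 T.2.1).1 T.2.2 C.2.2⟩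

lemma relSU_of_conjMap (T) (C : FSU r lam) : RelSU r lam C (conjMap T C) :=
  ⟨T.1, T.2.1, T.2.2, rfl⟩

lemma continuous_conjMap (T) : Continuous (conjMap (r := r) (lam := lam) T) := by
  apply Continuous.subtype_mk
  exact (continuous_const.matrix_mul continuous_subtype_val).matrix_mul continuous_const

lemma isOpenMap_mkSU : IsOpenMap (Quot.mk (RelSU r lam)) := by
  intro U hU
  rw [isOpen_coinduced]
  have hsat : Quot.mk (RelSU r lam) ⁻¹' (Quot.mk (RelSU r lam) '' U)
      = ⋃ (T : {T : Matrix (Fin (r+1)) (Fin (r+1)) ℂ //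
          T ∈ Matrix.specialUnitaryGroup (Fin (r+1)) ℂ ∧
            T * Matrix.diagonal lam = Matrix.diagonal lam * T}), conjMap T ⁻¹' U := by
    ext C
    simp only [Set.mem_preimage, Set.mem_image, Set.mem_iUnion]
    constructor
    · rintro ⟨C', hC', hmk⟩
      have heqv : Relation.EqvGen (RelSU r lam) C' C := Quot.eqvGen_exact hmk
      have hrel : RelSU r lam C C' :=
        (relSU_equivalence (r := r) (lam := lam)).symm
          (((relSU_equivalence (r := r) (lam := lam)).eqvGen_iff).1 heqv)
      obtain ⟨T, hT, hTA, hval⟩ := hrel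
      refine ⟨⟨T, hT, hTA⟩, ?_⟩
      have : conjMap ⟨T, hT, hTA⟩ C = C' := Subtype.ext hval.symm
      rwa [this]
    · rintro ⟨T, hT⟩
      exact ⟨conjMap T C, hT, (Quot.sound (relSU_of_conjMap T C)).symm⟩
  rw [hsat]
  exact isOpen_iUnion fun T => hU.preimage (continuous_conjMap T)

end Main

end FiberSplit


open FiberSplit

/-- If `A = diag(λ₀, …)` is unitary with `λ₀` a simple eigenvalue (and all
eigenvalues `n`-th powers of a common value, the eigenvalue pattern of representations of
`Γₙ`), then `F_σ = {B ∈ U(r) : (A,B) irreducible}/Stab(A)` is homeomorphic to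
`SF_σ × S¹`, via `B ↦ (B·(first column rescaled by (det B)⁻¹), det B)`. -/
theorem fiber_splits_su_times_circle (r n : ℕ) (lam : Fin (r + 1) → ℂ)
    (hcirc : ∀ i, ‖lam i‖ = 1)
    (hsimple : ∀ i, i ≠ 0 → lam i ≠ lam 0)
    (hpow : ∀ i, lam i ^ n = lam 0 ^ n) :
    ∃ f : Quot (RelU r lam) ≃ₜ Quot (RelSU r lam) × Circle,
      ∀ (B : FU r lam) (C : FSU r lam),
        C.1 = B.1 * Matrix.diagonal (fun j => if j = 0 then (B.1.det)⁻¹ else 1) →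
        (f (Quot.mk _ B)).1 = Quot.mk _ C ∧ ((f (Quot.mk _ B)).2 : ℂ) = B.1.det := by
  classical
  set F : FU r lam → Quot (RelSU r lam) × Circle :=
    fun B => (Quot.mk _ (phi hsimple B), delta B) with hFdef
  have hF : ∀ a b, RelU r lam a b → F a = F b := by
    intro a b h
    obtain ⟨h1, h2⟩ := sound_f hsimple h
    rw [hFdef]
    dsimp only
    rw [Quot.sound h1, h2]
  set e : Quot (RelU r lam) ≃ Quot (RelSU r lam) × Circle :=
    { toFun := Quot.lift F hF
      invFun := fun p => Quot.lift (fun C => Quot.mk _ (psi hsimple C p.2))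
        (fun a b h => Quot.sound (sound_g hsimple p.2 h)) p.1
      left_inv := by
        intro q
        induction q using Quot.ind with
        | _ B => exact congrArg (Quot.mk _) (psi_phi hsimple B)
      right_inv := by
        rintro ⟨q, z⟩
        induction q using Quot.ind with
        | _ C =>
          show (Quot.mk _ (phi hsimple (psi hsimple C z)), delta (psi hsimple C z))
            = (Quot.mk _ C, z)
          rw [phi_psi hsimple C z, delta_psi hsimple C z] } with hedef
  have hcont : Continuous e := by
    apply continuous_quot_lift
    exact Continuous.prodMk (continuous_quot_mk.comp (continuous_phi hsimple))
      continuous_delta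
  have hopen : IsOpenMap e := by
    intro V hV
    have hU0 : IsOpen (Quot.mk (RelU r lam) ⁻¹' V) := hV.preimage continuous_quot_mk
    have himg : ⇑e '' V = (Prod.map (Quot.mk (RelSU r lam)) (id : Circle → Circle)) ''
        ((fun B => (phi hsimple B, delta B)) '' (Quot.mk (RelU r lam) ⁻¹' V)) := by
      conv_lhs => rw [← Set.image_preimage_eq V Quot.mk_surjective]
      rw [Set.image_image, Set.image_image]
      rfl
    rw [himg]
    apply IsOpenMap.prodMap isOpenMap_mkSU IsOpenMap.id
    have himg2 : (fun B => (phi hsimple B, delta B)) '' (Quot.mk (RelU r lam) ⁻¹' V)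
        = (fun p : FSU r lam × Circle => psi hsimple p.1 p.2) ⁻¹'
            (Quot.mk (RelU r lam) ⁻¹' V) := by
      ext p
      obtain ⟨C, z⟩ := p
      constructor
      · rintro ⟨B, hB, hBp⟩
        rw [← hBp]
        simp only [Set.mem_preimage]
        rw [psi_phi hsimple B]
        exact hB
      · intro hp
        refine ⟨psi hsimple C z, hp, ?_⟩
        dsimp only
        rw [phi_psi hsimple C z, delta_psi hsimple C z]
    rw [himg2]
    exact hU0.preimage (continuous_psi hsimple)
  refine ⟨Equiv.toHomeomorphOfContinuousOpen e hcont hopen, ?_⟩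
  intro B C hC
  have hCphi : C = phi hsimple B := Subtype.ext hC
  have happ : (Equiv.toHomeomorphOfContinuousOpen e hcont hopen) (Quot.mk (RelU r lam) B)
      = (Quot.mk (RelSU r lam) (phi hsimple B), delta B) := by
    rw [Equiv.toHomeomorphOfContinuousOpen_apply, hedef]
    rfl
  exact ⟨by rw [happ, hCphi], by rw [happ]; rfl⟩
end
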